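/- arXiv:1602.04589 — 5 statements merged into one kernel-verified Lean document; each statement's English description precedes it below -/
import Mathlib

section
/- Let K ≥ 2 and let μ ∈ (0,1)^K satisfy μ_1 > μ_a for all a ≥ 2. Then for every w ∈ Σ_K, inf_{λ ∈ Alt(μ)} Σ_{a=1}^K w_a·kl(μ_a, λ_a) = min_{a ≠ 1} (w_1 + w_a)·I_{w_1/(w_1+w_a)}(μ_1, μ_a), with the convention that the a-th term on the right equals 0 when w_1 + w_a = 0. -/
/-- Bernoulli Kullback–Leibler divergence. -/
noncomputable def kl (x y : ℝ) : ℝ :=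
  x * Real.log (x / y) + (1 - x) * Real.log ((1 - x) / (1 - y))

/-- The parameterized Jensen–Shannon-type divergence `I_α`. -/
noncomputable def Ialpha (α x y : ℝ) : ℝ :=
  α * kl x (α * x + (1 - α) * y) + (1 - α) * kl y (α * x + (1 - α) * y)

/-- The probability simplex on `Fin K`. -/
def simplex (K : ℕ) : Set (Fin K → ℝ) :=
  {w | (∀ a, 0 ≤ w a) ∧ ∑ a, w a = 1}

/-- Alternative bandit models: vectors in `(0,1)^K` whose unique best arm is not arm `0`. -/
def Alt {K : ℕ} [NeZero K] (μ : Fin K → ℝ) : Set (Fin K → ℝ) :=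
  {lam | (∀ a, lam a ∈ Set.Ioo (0 : ℝ) 1) ∧ ∃ a, a ≠ 0 ∧ ∀ b, b ≠ a → lam b < lam a}

lemma erase_zero_nonempty (K : ℕ) :
    ((Finset.univ : Finset (Fin (K + 2))).erase 0).Nonempty :=
  ⟨1, Finset.mem_erase.mpr ⟨by simp [Fin.ext_iff], Finset.mem_univ _⟩⟩

open Set Real

lemma kl_self {x : ℝ} (hx : x ∈ Ioo (0:ℝ) 1) : kl x x = 0 := by
  have h1 : (0:ℝ) < 1 - x := by linarith [hx.2]
  simp [kl, div_self hx.1.ne', div_self h1.ne']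

lemma kl_nonneg {x y : ℝ} (hx : x ∈ Ioo (0:ℝ) 1) (hy : y ∈ Ioo (0:ℝ) 1) : 0 ≤ kl x y := by
  have hx1 : (0:ℝ) < 1 - x := by linarith [hx.2]
  have hy1 : (0:ℝ) < 1 - y := by linarith [hy.2]
  have hx0 : x ≠ 0 := hx.1.ne'
  have hx1' : (1:ℝ) - x ≠ 0 := hx1.ne'
  have h1 : Real.log (y/x) ≤ y/x - 1 := Real.log_le_sub_one_of_pos (div_pos hy.1 hx.1)
  have h2 : Real.log ((1-y)/(1-x)) ≤ (1-y)/(1-x) - 1 :=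
    Real.log_le_sub_one_of_pos (div_pos hy1 hx1)
  have e1 : x * (y/x - 1) = y - x := by field_simp
  have e2 : (1-x) * ((1-y)/(1-x) - 1) = x - y := by field_simp; ring
  have hr : kl x y = -(x * Real.log (y/x) + (1-x) * Real.log ((1-y)/(1-x))) := by
    rw [kl, Real.log_div hy.1.ne' hx.1.ne', Real.log_div hy1.ne' hx1.ne',
      Real.log_div hx.1.ne' hy.1.ne', Real.log_div hx1.ne' hy1.ne']
    ring
  have m1 : x * Real.log (y/x) ≤ x * (y/x - 1) := mul_le_mul_of_nonneg_left h1 hx.1.le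
  have m2 : (1-x) * Real.log ((1-y)/(1-x)) ≤ (1-x) * ((1-y)/(1-x) - 1) :=
    mul_le_mul_of_nonneg_left h2 hx1.le
  rw [hr]; linarith

lemma hasDerivAt_kl {x t : ℝ} (hx : x ∈ Ioo (0:ℝ) 1) (ht : t ∈ Ioo (0:ℝ) 1) :
    HasDerivAt (kl x) ((t - x) / (t * (1 - t))) t := by
  have hx1 : (0:ℝ) < 1 - x := by linarith [hx.2]
  have ht1 : (0:ℝ) < 1 - t := by linarith [ht.2]
  have hx0 : x ≠ 0 := hx.1.ne'
  have ht0 : t ≠ 0 := ht.1.ne'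
  have hx1' : (1:ℝ) - x ≠ 0 := hx1.ne'
  have ht1' : (1:ℝ) - t ≠ 0 := ht1.ne'
  have hA : HasDerivAt (fun s : ℝ => Real.log (x / s)) (-t⁻¹) t := by
    have hinner : HasDerivAt (fun s : ℝ => x / s) (x * -(t^2)⁻¹) t := by
      simpa [div_eq_mul_inv] using (hasDerivAt_inv ht.1.ne').const_mul x
    have := hinner.log (div_ne_zero hx0 ht0)
    convert this using 1
    field_simp
  have hB : HasDerivAt (fun s : ℝ => Real.log ((1 - x) / (1 - s))) ((1-t)⁻¹) t := by
    have h1 : HasDerivAt (fun s : ℝ => 1 - s) (-1) t := by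
      simpa using (hasDerivAt_id t).const_sub 1
    have h2 : HasDerivAt (fun s : ℝ => (1 - s)⁻¹) (-(-1) / (1-t)^2) t := h1.inv ht1.ne'
    have hinner : HasDerivAt (fun s : ℝ => (1 - x) / (1 - s)) ((1-x) * (-(-1)/(1-t)^2)) t := by
      simpa [div_eq_mul_inv] using h2.const_mul (1 - x)
    have := hinner.log (div_ne_zero hx1' ht1')
    convert this using 1
    field_simp
  have : HasDerivAt (kl x) (x * -t⁻¹ + (1-x) * (1-t)⁻¹) t :=
    (hA.const_mul x).add (hB.const_mul (1-x))
  convert this using 1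
  field_simp
  ring

/-- Derivative of the weighted sum `g t = w0 * kl x t + wa * kl y t`. -/
lemma hasDerivAt_g {x y w0 wa t : ℝ} (hx : x ∈ Ioo (0:ℝ) 1) (hy : y ∈ Ioo (0:ℝ) 1)
    (ht : t ∈ Ioo (0:ℝ) 1) :
    HasDerivAt (fun s => w0 * kl x s + wa * kl y s)
      (((w0 + wa) * t - (w0 * x + wa * y)) / (t * (1 - t))) t := by
  have := ((hasDerivAt_kl hx ht).const_mul w0).add ((hasDerivAt_kl hy ht).const_mul wa)
  refine this.congr_deriv ?_
  have ht0 : t ≠ 0 := ht.1.ne'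
  have ht1 : (1:ℝ) - t ≠ 0 := by intro h; have := ht.2; linarith [ht.2]
  ring

lemma mean_mem {x y w0 wa : ℝ} (hx : x ∈ Ioo (0:ℝ) 1) (hy : y ∈ Ioo (0:ℝ) 1)
    (h0 : 0 ≤ w0) (ha : 0 ≤ wa) (hs : 0 < w0 + wa) :
    (w0 * x + wa * y) / (w0 + wa) ∈ Ioo (0:ℝ) 1 := by
  constructor
  · apply div_pos _ hs
    rcases lt_or_ge 0 w0 with h | h
    · nlinarith [mul_pos h hx.1, mul_nonneg ha hy.1.le]
    · have hw0 : w0 = 0 := le_antisymm h h0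
      have hwa : 0 < wa := by linarith
      nlinarith [mul_pos hwa hy.1, show w0 * x = 0 by rw [hw0, zero_mul]]
  · rw [div_lt_one hs]
    rcases lt_or_ge 0 w0 with h | h
    · nlinarith [mul_pos h (show (0:ℝ) < 1 - x by linarith [hx.2]),
        mul_nonneg ha (show (0:ℝ) ≤ 1 - y by linarith [hy.2])]
    · have hw0 : w0 = 0 := le_antisymm h h0
      have hwa : 0 < wa := by linarith
      nlinarith [mul_pos hwa (show (0:ℝ) < 1 - y by linarith [hy.2]),
        show w0 * x = 0 by rw [hw0, zero_mul]]

lemma g_antitoneOn {x y w0 wa : ℝ} (hx : x ∈ Ioo (0:ℝ) 1) (hy : y ∈ Ioo (0:ℝ) 1)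
    (h0 : 0 ≤ w0) (ha : 0 ≤ wa) (hs : 0 < w0 + wa) :
    AntitoneOn (fun s => w0 * kl x s + wa * kl y s)
      (Ioc 0 ((w0 * x + wa * y) / (w0 + wa))) := by
  set m := (w0 * x + wa * y) / (w0 + wa) with hm
  have hmIoo : m ∈ Ioo (0:ℝ) 1 := mean_mem hx hy h0 ha hs
  have hsub : Ioc (0:ℝ) m ⊆ Ioo (0:ℝ) 1 := fun t ht => ⟨ht.1, lt_of_le_of_lt ht.2 hmIoo.2⟩
  apply antitoneOn_of_deriv_nonpos (convex_Ioc 0 m)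
  · exact fun t ht => (hasDerivAt_g hx hy (hsub ht)).continuousAt.continuousWithinAt
  · intro t ht
    rw [interior_Ioc] at ht
    exact ((hasDerivAt_g hx hy ⟨ht.1, lt_trans ht.2 hmIoo.2⟩).differentiableAt).differentiableWithinAt
  · intro t ht
    rw [interior_Ioc] at ht
    have htIoo : t ∈ Ioo (0:ℝ) 1 := ⟨ht.1, lt_trans ht.2 hmIoo.2⟩
    rw [(hasDerivAt_g hx hy htIoo).deriv]
    apply div_nonpos_of_nonpos_of_nonneg
    · have : (w0 + wa) * t < (w0 + wa) * m := by
        exact mul_lt_mul_of_pos_left ht.2 hs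
      have hmm : (w0 + wa) * m = w0 * x + wa * y := by
        rw [hm]; field_simp
      linarith
    · have := htIoo.2; nlinarith [htIoo.1]

lemma g_monotoneOn {x y w0 wa : ℝ} (hx : x ∈ Ioo (0:ℝ) 1) (hy : y ∈ Ioo (0:ℝ) 1)
    (h0 : 0 ≤ w0) (ha : 0 ≤ wa) (hs : 0 < w0 + wa) :
    MonotoneOn (fun s => w0 * kl x s + wa * kl y s)
      (Ico ((w0 * x + wa * y) / (w0 + wa)) 1) := by
  set m := (w0 * x + wa * y) / (w0 + wa) with hm
  have hmIoo : m ∈ Ioo (0:ℝ) 1 := mean_mem hx hy h0 ha hs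
  have hsub : Ico m (1:ℝ) ⊆ Ioo (0:ℝ) 1 := fun t ht => ⟨lt_of_lt_of_le hmIoo.1 ht.1, ht.2⟩
  apply monotoneOn_of_deriv_nonneg (convex_Ico m 1)
  · exact fun t ht => (hasDerivAt_g hx hy (hsub ht)).continuousAt.continuousWithinAt
  · intro t ht
    rw [interior_Ico] at ht
    exact ((hasDerivAt_g hx hy ⟨lt_trans hmIoo.1 ht.1, ht.2⟩).differentiableAt).differentiableWithinAt
  · intro t ht
    rw [interior_Ico] at ht
    have htIoo : t ∈ Ioo (0:ℝ) 1 := ⟨lt_trans hmIoo.1 ht.1, ht.2⟩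
    rw [(hasDerivAt_g hx hy htIoo).deriv]
    apply div_nonneg
    · have : (w0 + wa) * m < (w0 + wa) * t := mul_lt_mul_of_pos_left ht.1 hs
      have hmm : (w0 + wa) * m = w0 * x + wa * y := by
        rw [hm]; field_simp
      linarith
    · have := htIoo.2; nlinarith [htIoo.1]

lemma kl_antitoneOn {x : ℝ} (hx : x ∈ Ioo (0:ℝ) 1) : AntitoneOn (kl x) (Ioc 0 x) := by
  have h := g_antitoneOn (w0 := 1) (wa := 0) hx hx zero_le_one le_rfl (by norm_num)
  simpa using h

lemma kl_monotoneOn {x : ℝ} (hx : x ∈ Ioo (0:ℝ) 1) : MonotoneOn (kl x) (Ico x 1) := by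
  have h := g_monotoneOn (w0 := 0) (wa := 1) hx hx le_rfl zero_le_one (by norm_num)
  simpa using h

lemma smul_Ialpha {x y w0 wa : ℝ} (hs : w0 + wa ≠ 0) :
    (w0 + wa) * Ialpha (w0 / (w0 + wa)) x y
      = w0 * kl x ((w0 * x + wa * y) / (w0 + wa)) + wa * kl y ((w0 * x + wa * y) / (w0 + wa)) := by
  have h1 : (w0 / (w0 + wa)) * x + (1 - w0 / (w0 + wa)) * y = (w0 * x + wa * y) / (w0 + wa) := by
    field_simp; ring
  rw [Ialpha, h1]
  field_simp
  ring

lemma binary_lb {x y w0 wa l0 la : ℝ} (hx : x ∈ Ioo (0:ℝ) 1) (hy : y ∈ Ioo (0:ℝ) 1)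
    (hyx : y < x) (h0 : 0 ≤ w0) (ha : 0 ≤ wa) (hs : 0 < w0 + wa)
    (hl0 : l0 ∈ Ioo (0:ℝ) 1) (hla : la ∈ Ioo (0:ℝ) 1) (hle : l0 ≤ la) :
    w0 * kl x ((w0 * x + wa * y) / (w0 + wa)) + wa * kl y ((w0 * x + wa * y) / (w0 + wa))
      ≤ w0 * kl x l0 + wa * kl y la := by
  set m := (w0 * x + wa * y) / (w0 + wa) with hm
  have hmIoo : m ∈ Ioo (0:ℝ) 1 := mean_mem hx hy h0 ha hs
  have hym : y ≤ m := by
    rw [hm, le_div_iff₀ hs]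
    nlinarith [mul_nonneg h0 (le_of_lt (sub_pos.mpr hyx))]
  have hmx : m ≤ x := by
    rw [hm, div_le_iff₀ hs]
    nlinarith [mul_nonneg ha (le_of_lt (sub_pos.mpr hyx))]
  rcases le_or_gt la m with h | h
  · -- l0 ≤ la ≤ m
    have h1 : kl x la ≤ kl x l0 :=
      kl_antitoneOn hx ⟨hl0.1, by linarith⟩ ⟨hla.1, by linarith⟩ hle
    have h2 : w0 * kl x m + wa * kl y m ≤ w0 * kl x la + wa * kl y la :=
      g_antitoneOn hx hy h0 ha hs ⟨hla.1, h⟩ ⟨hmIoo.1, le_rfl⟩ h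
    nlinarith [mul_le_mul_of_nonneg_left h1 h0]
  rcases le_or_gt m l0 with h' | h'
  · -- m ≤ l0 ≤ la
    have h1 : kl y l0 ≤ kl y la :=
      kl_monotoneOn hy ⟨by linarith, hl0.2⟩ ⟨by linarith, hla.2⟩ hle
    have h2 : w0 * kl x m + wa * kl y m ≤ w0 * kl x l0 + wa * kl y l0 :=
      g_monotoneOn hx hy h0 ha hs ⟨le_rfl, hmIoo.2⟩ ⟨h', hl0.2⟩ h'
    nlinarith [mul_le_mul_of_nonneg_left h1 ha]
  · -- l0 < m < la
    have h1 : kl x m ≤ kl x l0 :=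
      kl_antitoneOn hx ⟨hl0.1, by linarith⟩ ⟨hmIoo.1, hmx⟩ h'.le
    have h2 : kl y m ≤ kl y la :=
      kl_monotoneOn hy ⟨hym, hmIoo.2⟩ ⟨by linarith, hla.2⟩ h.le
    nlinarith [mul_le_mul_of_nonneg_left h1 h0, mul_le_mul_of_nonneg_left h2 ha]

lemma continuousAt_kl {x t : ℝ} (hx : x ∈ Ioo (0:ℝ) 1) (ht : t ∈ Ioo (0:ℝ) 1) :
    ContinuousAt (kl x) t := (hasDerivAt_kl hx ht).continuousAt

lemma mem_Alt_aux {K : ℕ} (μ : Fin (K + 2) → ℝ)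
    (hμ : ∀ a, μ a ∈ Set.Ioo (0 : ℝ) 1)
    (hbest : ∀ a : Fin (K + 2), a ≠ 0 → μ a < μ 0)
    (a : Fin (K + 2)) (ha : a ≠ 0) :
    (fun b => if b = a then (μ 0 + 1) / 2 else μ b) ∈ Alt μ := by
  have hva : (fun b => if b = a then (μ 0 + 1) / 2 else μ b) a = (μ 0 + 1) / 2 := by simp
  have hvb : ∀ b, b ≠ a → (fun b => if b = a then (μ 0 + 1) / 2 else μ b) b = μ b := by
    intro b hb; simp [hb]
  constructor
  · intro b
    by_cases hb : b = a
    · subst hb; rw [hva]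
      exact ⟨by linarith [(hμ 0).1], by linarith [(hμ 0).2]⟩
    · rw [hvb b hb]; exact hμ b
  · refine ⟨a, ha, fun b hb => ?_⟩
    rw [hvb b hb, hva]
    by_cases hb0 : b = 0
    · rw [hb0]; linarith [(hμ 0).2]
    · have := hbest b hb0; linarith [(hμ 0).2]


/-- the best-response transportation cost for a fixed `w` in the simplex. -/
theorem inf_alt_eq_min (K : ℕ) (μ : Fin (K + 2) → ℝ)
    (hμ : ∀ a, μ a ∈ Set.Ioo (0 : ℝ) 1)
    (hbest : ∀ a : Fin (K + 2), a ≠ 0 → μ a < μ 0)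
    (w : Fin (K + 2) → ℝ) (hw : w ∈ simplex (K + 2)) :
    (⨅ lam : Alt μ, ∑ a, w a * kl (μ a) ((lam : Fin (K + 2) → ℝ) a)) =
      ((Finset.univ : Finset (Fin (K + 2))).erase 0).inf' (erase_zero_nonempty K)
        (fun a => if w 0 + w a = 0 then 0
          else (w 0 + w a) * Ialpha (w 0 / (w 0 + w a)) (μ 0) (μ a)) := by
  obtain ⟨hwpos, hwsum⟩ := hw
  have hμ0 := hμ 0
  set T := ((Finset.univ : Finset (Fin (K + 2))).erase 0) with hT
  set term : Fin (K + 2) → ℝ := fun a => if w 0 + w a = 0 then 0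
      else (w 0 + w a) * Ialpha (w 0 / (w 0 + w a)) (μ 0) (μ a) with hterm
  set R := T.inf' (erase_zero_nonempty K) term with hR
  have hmemT : ∀ a : Fin (K + 2), a ≠ 0 → a ∈ T :=
    fun a ha => Finset.mem_erase.mpr ⟨ha, Finset.mem_univ _⟩
  have hT0 : ∀ a ∈ T, a ≠ 0 := fun a ha => (Finset.mem_erase.mp ha).1
  have term_nonneg : ∀ a : Fin (K + 2), a ≠ 0 → 0 ≤ term a := by
    intro a ha
    simp only [hterm]
    split_ifs with h
    · exact le_rfl
    · have hs : 0 < w 0 + w a := (add_nonneg (hwpos 0) (hwpos a)).lt_of_ne' h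
      have hmem := mean_mem hμ0 (hμ a) (hwpos 0) (hwpos a) hs
      rw [smul_Ialpha h]
      exact add_nonneg (mul_nonneg (hwpos 0) (kl_nonneg hμ0 hmem))
        (mul_nonneg (hwpos a) (kl_nonneg (hμ a) hmem))
  have hRnonneg : 0 ≤ R :=
    Finset.le_inf' _ _ (fun b hb => term_nonneg b (hT0 b hb))
  have F_nonneg : ∀ lam : Fin (K + 2) → ℝ, (∀ b, lam b ∈ Set.Ioo (0:ℝ) 1) →
      0 ≤ ∑ a, w a * kl (μ a) (lam a) := fun lam h =>
    Finset.sum_nonneg fun b _ => mul_nonneg (hwpos b) (kl_nonneg (hμ b) (h b))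
  have hone : (1 : Fin (K + 2)) ≠ 0 := by simp [Fin.ext_iff]
  haveI hne : Nonempty (Alt μ) := ⟨⟨_, mem_Alt_aux μ hμ hbest 1 hone⟩⟩
  have hBdd : BddBelow (Set.range fun lam : Alt μ =>
      ∑ a, w a * kl (μ a) ((lam : Fin (K + 2) → ℝ) a)) := by
    refine ⟨0, ?_⟩
    rintro x ⟨lam, rfl⟩
    exact F_nonneg _ lam.2.1
  apply le_antisymm
  · -- inf ≤ R
    by_cases hcaseA : ∃ a ∈ T, w 0 + w a = 0
    · obtain ⟨a, haT, hs0⟩ := hcaseA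
      have ha0 : a ≠ 0 := hT0 a haT
      have hw0 : w 0 = 0 := le_antisymm (by linarith [hwpos a]) (hwpos 0)
      have hwa : w a = 0 := by linarith [hwpos 0]
      have hmem := mem_Alt_aux μ hμ hbest a ha0
      have hF0 : ∑ b, w b * kl (μ b) (if b = a then (μ 0 + 1) / 2 else μ b) = 0 := by
        apply Finset.sum_eq_zero
        intro b _
        by_cases hb : b = a
        · rw [hb, hwa, zero_mul]
        · rw [if_neg hb, kl_self (hμ b), mul_zero]
      have hle : (⨅ lam : Alt μ, ∑ a, w a * kl (μ a) ((lam : Fin (K + 2) → ℝ) a)) ≤ 0 := by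
        have := ciInf_le hBdd (⟨_, hmem⟩ : Alt μ)
        simpa [hF0] using this
      linarith
    · push_neg at hcaseA
      set mf : Fin (K + 2) → ℝ := fun a => (w 0 * μ 0 + w a * μ a) / (w 0 + w a) with hmf
      have hspos : ∀ a ∈ T, 0 < w 0 + w a :=
        fun a ha => (add_nonneg (hwpos 0) (hwpos a)).lt_of_ne' (hcaseA a ha)
      have hmf_mem : ∀ b ∈ T, mf b ∈ Set.Ioo (0:ℝ) 1 := by
        intro b hb
        simp only [hmf]
        exact mean_mem hμ0 (hμ b) (hwpos 0) (hwpos b) (hspos b hb)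
      have hmf_ge : ∀ b ∈ T, μ b ≤ mf b := by
        intro b hb
        simp only [hmf]
        rw [le_div_iff₀ (hspos b hb)]
        nlinarith [mul_nonneg (hwpos 0) (sub_nonneg.mpr (hbest b (hT0 b hb)).le)]
      have hmf_le : ∀ b ∈ T, mf b ≤ μ 0 := by
        intro b hb
        simp only [hmf]
        rw [div_le_iff₀ (hspos b hb)]
        nlinarith [mul_nonneg (hwpos b) (sub_nonneg.mpr (hbest b (hT0 b hb)).le)]
      have hterm_eq : ∀ b ∈ T, term b = w 0 * kl (μ 0) (mf b) + w b * kl (μ b) (mf b) := by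
        intro b hb
        simp only [hterm, hmf]
        rw [if_neg (hcaseA b hb), smul_Ialpha (hcaseA b hb)]
      obtain ⟨b0, hb0T, hb0R⟩ := Finset.exists_mem_eq_inf' (erase_zero_nonempty K) term
      obtain ⟨astar, hastarF, hmax⟩ := Finset.exists_max_image
        (T.filter (fun a => term a = R)) mf
        ⟨b0, Finset.mem_filter.mpr ⟨hb0T, hb0R.symm⟩⟩
      have hastarT : astar ∈ T := (Finset.mem_filter.mp hastarF).1
      have hastarR : term astar = R := (Finset.mem_filter.mp hastarF).2
      have hastar0 : astar ≠ 0 := hT0 astar hastarT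
      have hmIoo : mf astar ∈ Set.Ioo (0:ℝ) 1 := hmf_mem astar hastarT
      have hub : ∀ b : Fin (K + 2), b ≠ 0 → μ b ≤ mf astar := by
        intro b hb0
        by_contra hgt
        push_neg at hgt
        have hbT : b ∈ T := hmemT b hb0
        have h1 : term b ≤ w 0 * kl (μ 0) (μ b) := by
          rw [hterm_eq b hbT]
          have hg := g_antitoneOn hμ0 (hμ b) (hwpos 0) (hwpos b) (hspos b hbT)
            (Set.mem_Ioc.mpr ⟨(hμ b).1, hmf_ge b hbT⟩)
            (Set.mem_Ioc.mpr ⟨(hmf_mem b hbT).1, le_rfl⟩) (hmf_ge b hbT)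
          simp only at hg
          rw [kl_self (hμ b)] at hg
          simpa using hg
        have h2 : kl (μ 0) (μ b) ≤ kl (μ 0) (mf astar) :=
          kl_antitoneOn hμ0 (Set.mem_Ioc.mpr ⟨hmIoo.1, hmf_le astar hastarT⟩)
            (Set.mem_Ioc.mpr ⟨(hμ b).1, (hbest b hb0).le⟩) hgt.le
        have h3 : term b ≤ term astar := by
          rw [hterm_eq astar hastarT]
          have hmm := mul_le_mul_of_nonneg_left h2 (hwpos 0)
          have hnn : 0 ≤ w astar * kl (μ astar) (mf astar) :=
            mul_nonneg (hwpos astar) (kl_nonneg (hμ astar) hmIoo)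
          linarith
        have hbF : b ∈ T.filter (fun a => term a = R) := by
          exact Finset.mem_filter.mpr ⟨hbT, le_antisymm (hastarR ▸ h3)
            (Finset.inf'_le _ hbT)⟩
        have := hmax b hbF
        have := hmf_ge b hbT
        linarith
      -- construction of near-optimal alternatives
      have key : ∀ δ ∈ Set.Ioo (0:ℝ) (1 - mf astar),
          (⨅ lam : Alt μ, ∑ a, w a * kl (μ a) ((lam : Fin (K + 2) → ℝ) a)) ≤
            w 0 * kl (μ 0) (mf astar) + w astar * kl (μ astar) (mf astar + δ) := by
        intro δ hδ
        set lam : Fin (K + 2) → ℝ :=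
          fun b => if b = astar then mf astar + δ else if b = 0 then mf astar else μ b with hlam
        have hlam_astar : lam astar = mf astar + δ := by simp [hlam]
        have hlam_zero : lam 0 = mf astar := by simp [hlam, Ne.symm hastar0]
        have hlam_other : ∀ b, b ≠ 0 → b ≠ astar → lam b = μ b := by
          intro b h0 ha; simp [hlam, h0, ha]
        have hlamIoo : ∀ b, lam b ∈ Set.Ioo (0:ℝ) 1 := by
          intro b
          by_cases hb : b = astar
          · subst hb; rw [hlam_astar]
            exact ⟨by linarith [hmIoo.1, hδ.1], by linarith [hδ.2]⟩
          · by_cases hb0 : b = 0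
            · subst hb0; rw [hlam_zero]; exact hmIoo
            · rw [hlam_other b hb0 hb]; exact hμ b
        have hmemA : lam ∈ Alt μ := by
          refine ⟨hlamIoo, astar, hastar0, fun b hb => ?_⟩
          rw [hlam_astar]
          by_cases hb0 : b = 0
          · subst hb0; rw [hlam_zero]; linarith [hδ.1]
          · rw [hlam_other b hb0 hb]; linarith [hub b hb0, hδ.1]
        have hFval : ∑ b, w b * kl (μ b) (lam b)
            = w 0 * kl (μ 0) (mf astar) + w astar * kl (μ astar) (mf astar + δ) := by
          rw [← Finset.sum_subset (Finset.subset_univ ({0, astar} : Finset (Fin (K + 2))))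
            (fun b _ hb => ?_)]
          · rw [Finset.sum_pair (Ne.symm hastar0), hlam_zero, hlam_astar]
          · simp only [Finset.mem_insert, Finset.mem_singleton, not_or] at hb
            rw [hlam_other b hb.1 hb.2, kl_self (hμ b), mul_zero]
        calc (⨅ lam : Alt μ, ∑ a, w a * kl (μ a) ((lam : Fin (K + 2) → ℝ) a))
            ≤ ∑ b, w b * kl (μ b) (lam b) := ciInf_le hBdd (⟨lam, hmemA⟩ : Alt μ)
          _ = _ := hFval
      have hcont : Filter.Tendsto
          (fun δ : ℝ => w 0 * kl (μ 0) (mf astar) + w astar * kl (μ astar) (mf astar + δ))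
          (nhdsWithin 0 (Set.Ioi 0))
          (nhds (w 0 * kl (μ 0) (mf astar) + w astar * kl (μ astar) (mf astar))) := by
        have h1 : ContinuousAt (fun δ : ℝ => mf astar + δ) 0 :=
          continuousAt_const.add continuousAt_id
        have h2 : ContinuousAt (fun δ : ℝ => kl (μ astar) (mf astar + δ)) 0 := by
          have hkl : ContinuousAt (kl (μ astar)) ((fun δ : ℝ => mf astar + δ) 0) := by
            simpa using continuousAt_kl (hμ astar) hmIoo
          exact hkl.comp h1
        have h3 : ContinuousAt
            (fun δ : ℝ => w 0 * kl (μ 0) (mf astar) + w astar * kl (μ astar) (mf astar + δ)) 0 :=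
          continuousAt_const.add (continuousAt_const.mul h2)
        have := h3.tendsto.mono_left (nhdsWithin_le_nhds (s := Set.Ioi (0:ℝ)))
        simpa using this
      have hfinal : (⨅ lam : Alt μ, ∑ a, w a * kl (μ a) ((lam : Fin (K + 2) → ℝ) a)) ≤
          w 0 * kl (μ 0) (mf astar) + w astar * kl (μ astar) (mf astar) := by
        apply ge_of_tendsto hcont
        filter_upwards [Ioo_mem_nhdsGT_of_mem
          (show (0:ℝ) ∈ Set.Ico (0:ℝ) (1 - mf astar) from ⟨le_rfl, by linarith [hmIoo.2]⟩)]
          with δ hδ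
        exact key δ hδ
      rw [← hastarR, hterm_eq astar hastarT]
      exact hfinal
  · -- R ≤ inf
    apply le_ciInf
    rintro ⟨lam, hlamIoo, a, ha0, hbesta⟩
    have hsum2 : w 0 * kl (μ 0) (lam 0) + w a * kl (μ a) (lam a)
        ≤ ∑ b, w b * kl (μ b) (lam b) := by
      have h := Finset.sum_le_sum_of_subset_of_nonneg
        (Finset.subset_univ ({0, a} : Finset (Fin (K + 2))))
        (fun b _ _ => mul_nonneg (hwpos b) (kl_nonneg (hμ b) (hlamIoo b)))
      rwa [Finset.sum_pair (Ne.symm ha0)] at h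
    have hRa : R ≤ term a := by rw [hR]; exact Finset.inf'_le _ (hmemT a ha0)
    by_cases hs : w 0 + w a = 0
    · have hta : term a = 0 := by simp [hterm, hs]
      have hF := F_nonneg lam hlamIoo
      show R ≤ ∑ b, w b * kl (μ b) (lam b)
      linarith [hta ▸ hRa]
    · have hspos : 0 < w 0 + w a := (add_nonneg (hwpos 0) (hwpos a)).lt_of_ne' hs
      have hterm_eq : term a = w 0 * kl (μ 0) ((w 0 * μ 0 + w a * μ a) / (w 0 + w a))
          + w a * kl (μ a) ((w 0 * μ 0 + w a * μ a) / (w 0 + w a)) := by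
        simp only [hterm]
        rw [if_neg hs, smul_Ialpha hs]
      have hbin := binary_lb hμ0 (hμ a) (hbest a ha0) (hwpos 0) (hwpos a) hspos
        (hlamIoo 0) (hlamIoo a) (hbesta 0 (Ne.symm ha0)).le
      rw [hterm_eq] at hRa
      show R ≤ ∑ b, w b * kl (μ b) (lam b)
      linarith
end

section
/- Let 0 < μ_a < μ_1 < 1 and let w_1, w_a > 0. Then the infimum over pairs (λ_1, λ_a) ∈ (0,1)² with λ_a ≥ λ_1 of w_1·kl(μ_1, λ_1) + w_a·kl(μ_a, λ_a) equals (w_1 + w_a)·I_{w_1/(w_1+w_a)}(μ_1, μ_a), and this infimum is attained at λ_1 = λ_a = (w_1·μ_1 + w_a·μ_a)/(w_1 + w_a). -/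
/-- Tangent-line lower bound for the convex function `y ↦ kl x y` at the point `m`. -/
lemma kl_tangent (x y m : ℝ) (hx0 : 0 < x) (hx1 : x < 1) (hy0 : 0 < y) (hy1 : y < 1)
    (hm0 : 0 < m) (hm1 : m < 1) :
    kl x m + (m - x) / (m * (1 - m)) * (y - m) ≤ kl x y := by
  have h1m : (0:ℝ) < 1 - m := by linarith
  have h1y : (0:ℝ) < 1 - y := by linarith
  have h1x : (0:ℝ) < 1 - x := by linarith
  have h1 : Real.log (y / m) ≤ y / m - 1 := Real.log_le_sub_one_of_pos (by positivity)
  have h2 : Real.log ((1 - y) / (1 - m)) ≤ (1 - y) / (1 - m) - 1 :=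
    Real.log_le_sub_one_of_pos (by positivity)
  rw [Real.log_div hy0.ne' hm0.ne'] at h1
  rw [Real.log_div h1y.ne' h1m.ne'] at h2
  have e1 : x * (Real.log m - Real.log y) ≥ x * (1 - y / m) := by
    apply mul_le_mul_of_nonneg_left (by linarith) hx0.le
  have e2 : (1 - x) * (Real.log (1 - m) - Real.log (1 - y)) ≥ (1 - x) * (1 - (1 - y) / (1 - m)) := by
    apply mul_le_mul_of_nonneg_left (by linarith) h1x.le
  have key : x * (1 - y / m) + (1 - x) * (1 - (1 - y) / (1 - m))
      = (m - x) / (m * (1 - m)) * (y - m) := by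
    field_simp
    ring
  unfold kl
  rw [Real.log_div hx0.ne' hy0.ne', Real.log_div hx0.ne' hm0.ne',
    Real.log_div h1x.ne' h1y.ne', Real.log_div h1x.ne' h1m.ne']
  nlinarith [e1, e2, key]

/-- the two-dimensional transportation problem is solved by merging the two
means, yielding the value `(w₁+wₐ)·I_{w₁/(w₁+wₐ)}(μ₁,μₐ)`, attained at
`λ₁ = λₐ = (w₁μ₁+wₐμₐ)/(w₁+wₐ)`. -/
theorem transport_two_arms (μ1 μa w1 wa : ℝ)
    (hμa : 0 < μa) (hlt : μa < μ1) (hμ1 : μ1 < 1)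
    (hw1 : 0 < w1) (hwa : 0 < wa) :
    IsLeast {v : ℝ | ∃ l1 la : ℝ, l1 ∈ Set.Ioo (0 : ℝ) 1 ∧ la ∈ Set.Ioo (0 : ℝ) 1 ∧
        l1 ≤ la ∧ v = w1 * kl μ1 l1 + wa * kl μa la}
      ((w1 + wa) * Ialpha (w1 / (w1 + wa)) μ1 μa) ∧
    w1 * kl μ1 ((w1 * μ1 + wa * μa) / (w1 + wa)) +
        wa * kl μa ((w1 * μ1 + wa * μa) / (w1 + wa)) =
      (w1 + wa) * Ialpha (w1 / (w1 + wa)) μ1 μa := by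
  have hs : (0:ℝ) < w1 + wa := by linarith
  set m : ℝ := (w1 * μ1 + wa * μa) / (w1 + wa) with hm_def
  have hμa1 : μa < 1 := by linarith
  have hmμa : μa < m := by
    rw [hm_def, lt_div_iff₀ hs]; nlinarith
  have hmμ1 : m < μ1 := by
    rw [hm_def, div_lt_iff₀ hs]; nlinarith
  have hm0 : 0 < m := lt_trans hμa hmμa
  have hm1 : m < 1 := lt_trans hmμ1 hμ1
  have hc : w1 / (w1 + wa) * μ1 + (1 - w1 / (w1 + wa)) * μa = m := by
    rw [hm_def]; field_simp; ring
  have heq : w1 * kl μ1 m + wa * kl μa m = (w1 + wa) * Ialpha (w1 / (w1 + wa)) μ1 μa := by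
    simp only [Ialpha, hc]
    field_simp
    ring
  refine ⟨⟨⟨m, m, ⟨hm0, hm1⟩, ⟨hm0, hm1⟩, le_refl m, heq.symm⟩, ?_⟩, heq⟩
  rintro v ⟨l1, la, ⟨hl10, hl11⟩, ⟨hla0, hla1⟩, hle, rfl⟩
  have h1 := kl_tangent μ1 l1 m (lt_trans hμa hlt) hμ1 hl10 hl11 hm0 hm1
  have h2 := kl_tangent μa la m hμa hμa1 hla0 hla1 hm0 hm1
  have hz : w1 * (m - μ1) + wa * (m - μa) = 0 := by
    rw [hm_def]; field_simp; ring
  have hnum : w1 * (m - μ1) * (l1 - m) + wa * (m - μa) * (la - m)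
      = wa * (m - μa) * (la - l1) := by linear_combination (l1 - m) * hz
  have hbr : w1 * ((m - μ1) / (m * (1 - m)) * (l1 - m))
      + wa * ((m - μa) / (m * (1 - m)) * (la - m))
      = wa * (m - μa) * (la - l1) / (m * (1 - m)) := by
    rw [← hnum]; ring
  have hbr_nonneg : 0 ≤ wa * (m - μa) * (la - l1) / (m * (1 - m)) := by
    apply div_nonneg _ (by nlinarith)
    have : 0 ≤ m - μa := by linarith
    have : 0 ≤ la - l1 := by linarith
    positivity
  have hA := mul_le_mul_of_nonneg_left h1 hw1.le
  have hB := mul_le_mul_of_nonneg_left h2 hwa.le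
  rw [← heq]
  nlinarith [hA, hB, hbr, hbr_nonneg]
end

section
/- Let K ≥ 2 and let μ ∈ (0,1)^K satisfy μ_1 > μ_a for all a ≥ 2. If w* ∈ Σ_K is a maximizer over Σ_K of G(w) = min_{a≠1} (w_1+w_a)·I_{w_1/(w_1+w_a)}(μ_1,μ_a), then for all a, b ∈ {2,…,K}: (w*_1 + w*_a)·I_{w*_1/(w*_1+w*_a)}(μ_1, μ_a) = (w*_1 + w*_b)·I_{w*_1/(w*_1+w*_b)}(μ_1, μ_b). -/
/-- The objective `G(w) = min_{a ≠ 1} (w₁+wₐ)·I_{w₁/(w₁+wₐ)}(μ₁,μₐ)`, with the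
convention that the `a`-th term is `0` when `w₁ + wₐ = 0`. -/
noncomputable def G (K : ℕ) (μ : Fin (K + 2) → ℝ) (w : Fin (K + 2) → ℝ) : ℝ :=
  ((Finset.univ : Finset (Fin (K + 2))).erase 0).inf' (erase_zero_nonempty K)
    (fun a => if w 0 + w a = 0 then 0
      else (w 0 + w a) * Ialpha (w 0 / (w 0 + w a)) (μ 0) (μ a))


lemma kl_self_s3 {y : ℝ} (h0 : y ≠ 0) (h1 : y ≠ 1) : kl y y = 0 := by
  have h1' : (1 : ℝ) - y ≠ 0 := sub_ne_zero.mpr (Ne.symm h1)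
  simp [kl, div_self h0, div_self h1']

lemma kl_expand {x z : ℝ} (hx0 : x ≠ 0) (hx1 : x ≠ 1) (hz0 : z ≠ 0) (hz1 : z ≠ 1) :
    kl x z = x * (Real.log x - Real.log z)
      + (1 - x) * (Real.log (1 - x) - Real.log (1 - z)) := by
  rw [kl, Real.log_div hx0 hz0,
    Real.log_div (sub_ne_zero.mpr (Ne.symm hx1)) (sub_ne_zero.mpr (Ne.symm hz1))]

lemma kl_nonneg_s3 {x z : ℝ} (hx : x ∈ Set.Ioo (0:ℝ) 1) (hz : z ∈ Set.Ioo (0:ℝ) 1) :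
    0 ≤ kl x z := by
  obtain ⟨hx0, hx1⟩ := hx; obtain ⟨hz0, hz1⟩ := hz
  have h1 : Real.log (z / x) ≤ z / x - 1 := Real.log_le_sub_one_of_pos (by positivity)
  have h2 : Real.log ((1 - z) / (1 - x)) ≤ (1 - z) / (1 - x) - 1 :=
    Real.log_le_sub_one_of_pos (div_pos (by linarith) (by linarith))
  have e1 : Real.log (z / x) = Real.log z - Real.log x := Real.log_div hz0.ne' hx0.ne'
  have e2 : Real.log ((1 - z) / (1 - x)) = Real.log (1 - z) - Real.log (1 - x) :=
    Real.log_div (by linarith) (by linarith)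
  have f1 : x * (z / x - 1) = z - x := by
    rw [mul_sub, mul_div_cancel₀ _ hx0.ne', mul_one]
  have f2 : (1 - x) * ((1 - z) / (1 - x) - 1) = x - z := by
    rw [mul_sub, mul_div_cancel₀ _ (by linarith : (1:ℝ) - x ≠ 0), mul_one]; ring
  have g1 := mul_le_mul_of_nonneg_left h1 hx0.le
  have g2 := mul_le_mul_of_nonneg_left h2 (by linarith : (0:ℝ) ≤ 1 - x)
  rw [kl_expand hx0.ne' hx1.ne hz0.ne' hz1.ne]
  nlinarith [g1, g2]

lemma kl_pos {x z : ℝ} (hx : x ∈ Set.Ioo (0:ℝ) 1) (hz : z ∈ Set.Ioo (0:ℝ) 1)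
    (hne : x ≠ z) : 0 < kl x z := by
  obtain ⟨hx0, hx1⟩ := hx; obtain ⟨hz0, hz1⟩ := hz
  have hne' : z / x ≠ 1 := by
    intro h
    rw [div_eq_one_iff_eq hx0.ne'] at h
    exact hne h.symm
  have h1 : Real.log (z / x) < z / x - 1 :=
    Real.log_lt_sub_one_of_pos (by positivity) hne'
  have h2 : Real.log ((1 - z) / (1 - x)) ≤ (1 - z) / (1 - x) - 1 :=
    Real.log_le_sub_one_of_pos (div_pos (by linarith) (by linarith))
  have e1 : Real.log (z / x) = Real.log z - Real.log x := Real.log_div hz0.ne' hx0.ne'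
  have e2 : Real.log ((1 - z) / (1 - x)) = Real.log (1 - z) - Real.log (1 - x) :=
    Real.log_div (by linarith) (by linarith)
  have f1 : x * (z / x - 1) = z - x := by
    rw [mul_sub, mul_div_cancel₀ _ hx0.ne', mul_one]
  have f2 : (1 - x) * ((1 - z) / (1 - x) - 1) = x - z := by
    rw [mul_sub, mul_div_cancel₀ _ (by linarith : (1:ℝ) - x ≠ 0), mul_one]; ring
  have g1 := mul_lt_mul_of_pos_left h1 hx0
  have g2 := mul_le_mul_of_nonneg_left h2 (by linarith : (0:ℝ) ≤ 1 - x)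
  rw [kl_expand hx0.ne' hx1.ne hz0.ne' hz1.ne]
  nlinarith [g1, g2]

lemma kl_upper {x y z : ℝ} (hy : y ∈ Set.Ioo (0:ℝ) 1) (hx1 : x < 1)
    (hyz : y ≤ z) (hzx : z ≤ x) :
    kl y z ≤ (1 - y) * Real.log ((1 - y) / (1 - x)) := by
  obtain ⟨hy0, hy1⟩ := hy
  have hz0 : 0 < z := lt_of_lt_of_le hy0 hyz
  have hz1 : z < 1 := lt_of_le_of_lt hzx hx1
  have t1 : Real.log (y / z) ≤ 0 :=
    Real.log_nonpos (by positivity) ((div_le_one hz0).mpr hyz)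
  have t2 : (1 - y) / (1 - z) ≤ (1 - y) / (1 - x) :=
    div_le_div_of_nonneg_left (by linarith) (by linarith) (by linarith)
  have t3 : Real.log ((1 - y) / (1 - z)) ≤ Real.log ((1 - y) / (1 - x)) :=
    Real.log_le_log (div_pos (by linarith) (by linarith)) t2
  have := mul_le_mul_of_nonneg_left t3 (by linarith : (0:ℝ) ≤ 1 - y)
  have := mul_nonpos_of_nonneg_of_nonpos hy0.le t1
  rw [kl]; linarith

/-- weighted mean -/
noncomputable def mid (x y u v : ℝ) : ℝ := (u * x + v * y) / (u + v)

/-- the term function in "two-point" form -/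
noncomputable def Ft (x y u v : ℝ) : ℝ :=
  u * kl x (mid x y u v) + v * kl y (mid x y u v)

lemma term_eq_Ft {x y u v : ℝ} (huv : u + v ≠ 0) :
    (u + v) * Ialpha (u / (u + v)) x y = Ft x y u v := by
  have hmid : u / (u + v) * x + (1 - u / (u + v)) * y = mid x y u v := by
    rw [mid]; field_simp; ring
  rw [Ialpha, hmid, Ft]
  field_simp; ring

lemma mid_gt {x y u v : ℝ} (hu : 0 < u) (hv : 0 ≤ v) (hxy : y < x) :
    y < mid x y u v := by
  rw [mid, lt_div_iff₀ (by linarith)]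
  nlinarith

lemma mid_le {x y u v : ℝ} (hu : 0 < u) (hv : 0 ≤ v) (hxy : y < x) :
    mid x y u v ≤ x := by
  rw [mid, div_le_iff₀ (by linarith)]
  nlinarith

lemma mid_lt {x y u v : ℝ} (hu : 0 < u) (hv : 0 < v) (hxy : y < x) :
    mid x y u v < x := by
  rw [mid, div_lt_iff₀ (by linarith)]
  nlinarith

lemma mid_mem {x y u v : ℝ} (hu : 0 < u) (hv : 0 ≤ v) (hxy : y < x)
    (hy : 0 < y) (hx : x < 1) : mid x y u v ∈ Set.Ioo (0:ℝ) 1 :=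
  ⟨lt_trans hy (mid_gt hu hv hxy), lt_of_le_of_lt (mid_le hu hv hxy) hx⟩

/-- transfer identity -/
lemma transfer {x y z u v : ℝ} (hx : x ∈ Set.Ioo (0:ℝ) 1) (hy : y ∈ Set.Ioo (0:ℝ) 1)
    (hz : z ∈ Set.Ioo (0:ℝ) 1) (hm : mid x y u v ∈ Set.Ioo (0:ℝ) 1)
    (huv : u + v ≠ 0) :
    u * kl x z + v * kl y z = Ft x y u v + (u + v) * kl (mid x y u v) z := by
  set m := mid x y u v with hmdef
  have h1 : u * x + v * y = (u + v) * m := by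
    rw [hmdef, mid, mul_div_cancel₀ _ huv]
  have h2 : u * (1 - x) + v * (1 - y) = (u + v) * (1 - m) := by ring_nf; nlinarith [h1]
  rw [Ft, kl_expand hx.1.ne' hx.2.ne hz.1.ne' hz.2.ne,
    kl_expand hy.1.ne' hy.2.ne hz.1.ne' hz.2.ne,
    kl_expand hx.1.ne' hx.2.ne hm.1.ne' hm.2.ne,
    kl_expand hy.1.ne' hy.2.ne hm.1.ne' hm.2.ne,
    kl_expand hm.1.ne' hm.2.ne hz.1.ne' hz.2.ne]
  linear_combination (Real.log m - Real.log z) * h1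
    + (Real.log (1 - m) - Real.log (1 - z)) * h2

lemma Ft_zero {x y u : ℝ} (hu : u ≠ 0) (hx0 : x ≠ 0) (hx1 : x ≠ 1) :
    Ft x y u 0 = 0 := by
  have : mid x y u 0 = x := by rw [mid]; field_simp; simp [hu]
  rw [Ft, this, kl_self_s3 hx0 hx1]; ring

lemma Ft_pos {x y u v : ℝ} (hx : x ∈ Set.Ioo (0:ℝ) 1) (hy : y ∈ Set.Ioo (0:ℝ) 1)
    (hxy : y < x) (hu : 0 < u) (hv : 0 < v) : 0 < Ft x y u v := by
  have hm := mid_mem hu hv.le hxy hy.1 hx.2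
  have h1 : 0 < kl x (mid x y u v) := kl_pos hx hm (mid_lt hu hv hxy).ne'
  have h2 : 0 < kl y (mid x y u v) := kl_pos hy hm (mid_gt hu hv.le hxy).ne
  rw [Ft]; positivity

lemma Ft_nonneg {x y u v : ℝ} (hx : x ∈ Set.Ioo (0:ℝ) 1) (hy : y ∈ Set.Ioo (0:ℝ) 1)
    (hxy : y < x) (hu : 0 < u) (hv : 0 ≤ v) : 0 ≤ Ft x y u v := by
  have hm := mid_mem hu hv hxy hy.1 hx.2
  have h1 : 0 ≤ kl x (mid x y u v) := kl_nonneg_s3 hx hm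
  have h2 : 0 ≤ kl y (mid x y u v) := kl_nonneg_s3 hy hm
  rw [Ft]; positivity

/-- strict monotonicity of `Ft` in `v`. -/
lemma Ft_strictMono {x y u v v' : ℝ} (hx : x ∈ Set.Ioo (0:ℝ) 1)
    (hy : y ∈ Set.Ioo (0:ℝ) 1) (hxy : y < x) (hu : 0 < u) (hv : 0 ≤ v)
    (hvv : v < v') : Ft x y u v < Ft x y u v' := by
  have hv' : 0 < v' := lt_of_le_of_lt hv hvv
  have hm := mid_mem hu hv hxy hy.1 hx.2
  have hm' := mid_mem hu hv'.le hxy hy.1 hx.2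
  have htr := transfer (z := mid x y u v') hx hy hm' hm (by linarith)
  have hkl : 0 < kl y (mid x y u v') := kl_pos hy hm' (mid_gt hu hv'.le hxy).ne
  have hkl2 : 0 ≤ kl (mid x y u v) (mid x y u v') := kl_nonneg_s3 hm hm'
  have hF' : Ft x y u v' = (u * kl x (mid x y u v') + v * kl y (mid x y u v'))
      + (v' - v) * kl y (mid x y u v') := by rw [Ft]; ring
  nlinarith [htr, hF']

/-- quantitative lower bound when decreasing `v` by `ε`. -/
lemma Ft_decrease {x y u v ε : ℝ} (hx : x ∈ Set.Ioo (0:ℝ) 1)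
    (hy : y ∈ Set.Ioo (0:ℝ) 1) (hxy : y < x) (hu : 0 < u) (hε : 0 ≤ ε)
    (hεv : ε ≤ v) :
    Ft x y u v - ε * ((1 - y) * Real.log ((1 - y) / (1 - x))) ≤ Ft x y u (v - ε) := by
  have hv : 0 ≤ v := le_trans hε hεv
  have hv'' : 0 ≤ v - ε := by linarith
  have hm := mid_mem hu hv hxy hy.1 hx.2
  have hm'' := mid_mem hu hv'' hxy hy.1 hx.2
  have htr := transfer (z := mid x y u (v - ε)) hx hy hm'' hm (by linarith)
  have hkl2 : 0 ≤ kl (mid x y u v) (mid x y u (v - ε)) := kl_nonneg_s3 hm hm''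
  have hub : kl y (mid x y u (v - ε)) ≤ (1 - y) * Real.log ((1 - y) / (1 - x)) :=
    kl_upper hy hx.2 (mid_gt hu hv'' hxy).le (mid_le hu hv'' hxy)
  have hF'' : Ft x y u (v - ε) = (u * kl x (mid x y u (v - ε)) + v * kl y (mid x y u (v - ε)))
      - ε * kl y (mid x y u (v - ε)) := by rw [Ft]; ring
  nlinarith [htr, hF'', hub, hkl2, mul_le_mul_of_nonneg_left hub hε]


noncomputable def term (K : ℕ) (μ w : Fin (K + 2) → ℝ) (c : Fin (K + 2)) : ℝ :=
  if w 0 + w c = 0 then 0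
    else (w 0 + w c) * Ialpha (w 0 / (w 0 + w c)) (μ 0) (μ c)

lemma G_eq (K : ℕ) (μ w : Fin (K + 2) → ℝ) :
    G K μ w = ((Finset.univ : Finset (Fin (K + 2))).erase 0).inf'
      (erase_zero_nonempty K) (term K μ w) := rfl

lemma term_eq {K : ℕ} {μ w : Fin (K + 2) → ℝ} {c : Fin (K + 2)}
    (h : w 0 + w c ≠ 0) :
    term K μ w c = Ft (μ 0) (μ c) (w 0) (w c) := by
  rw [term, if_neg h, term_eq_Ft h]

set_option maxHeartbeats 2000000 in
lemma key_lemma (K : ℕ) (μ : Fin (K + 2) → ℝ)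
    (hμ : ∀ a, μ a ∈ Set.Ioo (0 : ℝ) 1)
    (hbest : ∀ a : Fin (K + 2), a ≠ 0 → μ a < μ 0)
    (wstar : Fin (K + 2) → ℝ) (hws : wstar ∈ simplex (K + 2))
    (hmax : ∀ w ∈ simplex (K + 2), G K μ w ≤ G K μ wstar)
    (a b : Fin (K + 2)) (ha : a ≠ 0) (hb : b ≠ 0)
    (hlt : term K μ wstar b < term K μ wstar a) : False := by
  have hamem : a ∈ (Finset.univ : Finset (Fin (K + 2))).erase 0 :=
    Finset.mem_erase.mpr ⟨ha, Finset.mem_univ _⟩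
  have hbmem : b ∈ (Finset.univ : Finset (Fin (K + 2))).erase 0 :=
    Finset.mem_erase.mpr ⟨hb, Finset.mem_univ _⟩
  -- the uniform vector has positive objective value
  have hKpos : (0:ℝ) < (K:ℝ) + 2 := by positivity
  have huu : (0:ℝ) < 1 / ((K:ℝ) + 2) := by positivity
  have hGu : 0 < G K μ (fun _ => 1 / ((K:ℝ) + 2)) := by
    rw [G_eq, Finset.lt_inf'_iff]
    intro c hc
    have hc0 : c ≠ 0 := (Finset.mem_erase.mp hc).1
    have hnz : (fun _ : Fin (K+2) => 1 / ((K:ℝ) + 2)) 0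
        + (fun _ : Fin (K+2) => 1 / ((K:ℝ) + 2)) c ≠ 0 := by
      show (1:ℝ) / ((K:ℝ) + 2) + 1 / ((K:ℝ) + 2) ≠ 0
      positivity
    rw [term_eq hnz]
    exact Ft_pos (hμ 0) (hμ c) (hbest c hc0) huu huu
  have hu_simplex : (fun _ => 1 / ((K:ℝ) + 2)) ∈ simplex (K + 2) := by
    refine ⟨fun _ => huu.le, ?_⟩
    rw [Finset.sum_const, Finset.card_univ, Fintype.card_fin, nsmul_eq_mul]
    push_cast
    field_simp
  have hG_pos : 0 < G K μ wstar := lt_of_lt_of_le hGu (hmax _ hu_simplex)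
  -- the top weight is positive
  have hw0 : 0 < wstar 0 := by
    rcases (hws.1 0).lt_or_eq with h | h
    · exact h
    · exfalso
      have hterm0 : term K μ wstar b = 0 := by
        rw [term]
        split_ifs with h'
        · rfl
        · have hb0 : wstar 0 + wstar b = wstar b := by rw [← h]; ring
          have : wstar 0 / (wstar 0 + wstar b) = 0 := by rw [← h, zero_div]
          rw [this]
          have hI : Ialpha 0 (μ 0) (μ b) = 0 := by
            have : (0:ℝ) * μ 0 + (1 - 0) * μ b = μ b := by ring
            rw [Ialpha, this, kl_self_s3 (hμ b).1.ne' (hμ b).2.ne]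
            ring
          rw [hI, mul_zero]
      have h2 : G K μ wstar ≤ term K μ wstar b := by
        rw [G_eq]; exact Finset.inf'_le _ hbmem
      rw [hterm0] at h2
      linarith
  have hGb : G K μ wstar ≤ term K μ wstar b := by
    rw [G_eq]; exact Finset.inf'_le _ hbmem
  have hGlt : G K μ wstar < term K μ wstar a := lt_of_le_of_lt hGb hlt
  -- weight of arm a is positive
  have hwa : 0 < wstar a := by
    rcases (hws.1 a).lt_or_eq with h | h
    · exact h
    · exfalso
      have h0a : wstar 0 + wstar a ≠ 0 := by rw [← h, add_zero]; exact hw0.ne'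
      have : term K μ wstar a = 0 := by
        rw [term_eq h0a, ← h, Ft_zero hw0.ne' (hμ 0).1.ne' (hμ 0).2.ne]
      linarith
  have hab : a ≠ b := by
    intro h; rw [h] at hlt; exact lt_irrefl _ hlt
  -- the set of other suboptimal arms
  set S : Finset (Fin (K + 2)) :=
    ((Finset.univ : Finset (Fin (K + 2))).erase 0).erase a with hSdef
  have hbS : b ∈ S := Finset.mem_erase.mpr ⟨(Ne.symm hab), hbmem⟩
  have hN : 0 < S.card := Finset.card_pos.mpr ⟨b, hbS⟩
  have hNR : (0:ℝ) < (S.card : ℝ) := by exact_mod_cast hN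
  -- constants
  set C : ℝ := (1 - μ a) * Real.log ((1 - μ a) / (1 - μ 0)) with hCdef
  have hC : 0 < C := by
    have h1 : μ a < μ 0 := hbest a ha
    have h2 : (0:ℝ) < 1 - μ 0 := by linarith [(hμ 0).2]
    have h3 : (1:ℝ) < (1 - μ a) / (1 - μ 0) := (one_lt_div h2).mpr (by linarith)
    exact mul_pos (by linarith [(hμ a).2]) (Real.log_pos h3)
  set D : ℝ := term K μ wstar a - G K μ wstar with hDdef
  have hD : 0 < D := by rw [hDdef]; linarith
  set ε : ℝ := min (wstar a) (D / (2 * C)) with hεdef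
  have hε : 0 < ε := lt_min hwa (by positivity)
  have hεa : ε ≤ wstar a := min_le_left _ _
  have hεC : ε * C < D := by
    have h1 : ε ≤ D / (2 * C) := min_le_right _ _
    have h2 : ε * C ≤ D / (2 * C) * C := mul_le_mul_of_nonneg_right h1 hC.le
    have h3 : D / (2 * C) * C = D / 2 := by field_simp
    linarith
  have hεN : 0 < ε / (S.card : ℝ) := div_pos hε hNR
  -- perturbed weights
  set w' : Fin (K + 2) → ℝ := fun c =>
    if c = a then wstar a - ε else if c = 0 then wstar 0 else wstar c + ε / (S.card : ℝ)
    with hw'def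
  have hw'0 : w' 0 = wstar 0 := by
    rw [hw'def]; simp [Ne.symm ha]
  have hw'a : w' a = wstar a - ε := by rw [hw'def]; simp
  have hw'S : ∀ c, c ≠ a → c ≠ 0 → w' c = wstar c + ε / (S.card : ℝ) := by
    intro c h1 h2; rw [hw'def]; simp [h1, h2]
  -- sum decomposition
  have hsum_split : ∀ v : Fin (K + 2) → ℝ,
      ∑ c, v c = (∑ c ∈ S, v c + v a) + v 0 := by
    intro v
    rw [hSdef, Finset.sum_erase_add _ _ hamem, Finset.sum_erase_add _ _ (Finset.mem_univ 0)]
  have hw'_simplex : w' ∈ simplex (K + 2) := by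
    constructor
    · intro c
      by_cases h1 : c = a
      · rw [h1, hw'a]; linarith
      · by_cases h2 : c = 0
        · rw [h2, hw'0]; exact hws.1 0
        · rw [hw'S c h1 h2]
          have := hws.1 c
          linarith
    · have hSsum : ∑ c ∈ S, w' c = ∑ c ∈ S, wstar c + ε := by
        rw [Finset.sum_congr rfl (fun c hc => hw'S c
          (Finset.mem_erase.mp hc).1 (Finset.mem_erase.mp (Finset.mem_erase.mp hc).2).1)]
        rw [Finset.sum_add_distrib, Finset.sum_const, nsmul_eq_mul,
          mul_div_cancel₀ _ hNR.ne']
      have h1 := hsum_split w'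
      have h2 := hsum_split wstar
      rw [hSsum, hw'a, hw'0] at h1
      rw [hws.2] at h2
      rw [h1]
      linarith
  -- the perturbed point has strictly larger objective value
  have hbig : G K μ wstar < G K μ w' := by
    rw [G_eq K μ w', Finset.lt_inf'_iff]
    intro c hc
    have hc0 : c ≠ 0 := (Finset.mem_erase.mp hc).1
    by_cases hca : c = a
    · subst hca
      have hne : w' 0 + w' c ≠ 0 := by
        rw [hw'0, hw'a]; intro h; nlinarith
      rw [term_eq hne, hw'0, hw'a]
      have hdec := Ft_decrease (hμ 0) (hμ c) (hbest c hc0) hw0 hε.le hεa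
      have hta : term K μ wstar c = Ft (μ 0) (μ c) (wstar 0) (wstar c) :=
        term_eq (by intro h; nlinarith [hws.1 c])
      rw [← hCdef] at hdec
      have hD2 : term K μ wstar c - G K μ wstar = D := by rw [hDdef]
      rw [hta] at hD2
      linarith
    · have hwc := hws.1 c
      have hne : w' 0 + w' c ≠ 0 := by
        rw [hw'0, hw'S c hca hc0]; intro h; nlinarith
      rw [term_eq hne, hw'0, hw'S c hca hc0]
      have hmono := Ft_strictMono (hμ 0) (hμ c) (hbest c hc0) hw0 hwc
        (by linarith : wstar c < wstar c + ε / (S.card : ℝ))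
      have hGc : G K μ wstar ≤ term K μ wstar c := by
        rw [G_eq]; exact Finset.inf'_le _ hc
      have htc : term K μ wstar c = Ft (μ 0) (μ c) (wstar 0) (wstar c) :=
        term_eq (by intro h; nlinarith [hws.1 c])
      rw [htc] at hGc
      linarith
  exact absurd (hmax w' hw'_simplex) (not_le.mpr hbig)

/-- at any maximizer of `G` over the simplex, all the terms
`(w*₁+w*ₐ)·I_{w*₁/(w*₁+w*ₐ)}(μ₁,μₐ)`, `a ≠ 1`, are equal. -/
theorem all_terms_equal_at_maximizer (K : ℕ) (μ : Fin (K + 2) → ℝ)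
    (hμ : ∀ a, μ a ∈ Set.Ioo (0 : ℝ) 1)
    (hbest : ∀ a : Fin (K + 2), a ≠ 0 → μ a < μ 0)
    (wstar : Fin (K + 2) → ℝ) (hws : wstar ∈ simplex (K + 2))
    (hmax : ∀ w ∈ simplex (K + 2), G K μ w ≤ G K μ wstar)
    (a b : Fin (K + 2)) (ha : a ≠ 0) (hb : b ≠ 0) :
    (if wstar 0 + wstar a = 0 then 0
      else (wstar 0 + wstar a) * Ialpha (wstar 0 / (wstar 0 + wstar a)) (μ 0) (μ a)) =
    (if wstar 0 + wstar b = 0 then (0 : ℝ)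
      else (wstar 0 + wstar b) * Ialpha (wstar 0 / (wstar 0 + wstar b)) (μ 0) (μ b)) := by
  have hterm_a : (if wstar 0 + wstar a = 0 then (0:ℝ)
      else (wstar 0 + wstar a) * Ialpha (wstar 0 / (wstar 0 + wstar a)) (μ 0) (μ a))
      = term K μ wstar a := rfl
  have hterm_b : (if wstar 0 + wstar b = 0 then (0:ℝ)
      else (wstar 0 + wstar b) * Ialpha (wstar 0 / (wstar 0 + wstar b)) (μ 0) (μ b))
      = term K μ wstar b := rfl
  rw [hterm_a, hterm_b]
  rcases lt_trichotomy (term K μ wstar a) (term K μ wstar b) with h | h | h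
  · exact (key_lemma K μ hμ hbest wstar hws hmax b a hb ha h).elim
  · exact h
  · exact (key_lemma K μ hμ hbest wstar hws hmax a b ha hb h).elim
end

section
/- Let 0 < μ_a < μ_1 < 1. The function g_a : [0,∞) → ℝ defined by g_a(x) = kl(μ_1, m_a(x)) + x·kl(μ_a, m_a(x)), where m_a(x) = (μ_1 + x·μ_a)/(1+x), satisfies: g_a(0) = 0, g_a is continuous and strictly increasing on [0,∞), and g_a(x) → kl(μ_1, μ_a) as x → ∞; consequently g_a is a bijection from [0,∞) onto [0, kl(μ_1, μ_a)). -/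
/-- The weighted mean `m_a(x) = (μ₁ + x μₐ)/(1+x)`. -/
noncomputable def marm (μ1 μa x : ℝ) : ℝ := (μ1 + x * μa) / (1 + x)

/-- The function `g_a(x) = kl(μ₁, m_a(x)) + x·kl(μₐ, m_a(x))`. -/
noncomputable def garm (μ1 μa x : ℝ) : ℝ :=
  kl μ1 (marm μ1 μa x) + x * kl μa (marm μ1 μa x)

lemma kl_self_s4 {p : ℝ} (hp : 0 < p) (hp1 : p < 1) : kl p p = 0 := by
  have h1 : (1:ℝ) - p ≠ 0 := by linarith
  simp [kl, div_self hp.ne', div_self h1]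

lemma kl_pos_s4 {p q : ℝ} (hp : 0 < p) (hp1 : p < 1) (hq : 0 < q) (hq1 : q < 1)
    (hne : p ≠ q) : 0 < kl p q := by
  have hp1' : (0:ℝ) < 1 - p := by linarith
  have hq1' : (0:ℝ) < 1 - q := by linarith
  have h1 : Real.log (q / p) < q / p - 1 :=
    Real.log_lt_sub_one_of_pos (by positivity)
      (by intro h; apply hne; field_simp at h; linarith)
  have h2 : Real.log ((1 - q) / (1 - p)) < (1 - q) / (1 - p) - 1 :=
    Real.log_lt_sub_one_of_pos (by positivity)
      (by intro h; apply hne; field_simp at h; linarith)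
  have e1 : Real.log (p / q) = Real.log p - Real.log q := Real.log_div hp.ne' hq.ne'
  have e2 : Real.log ((1-p) / (1-q)) = Real.log (1-p) - Real.log (1-q) :=
    Real.log_div hp1'.ne' hq1'.ne'
  have e3 : Real.log (q / p) = Real.log q - Real.log p := Real.log_div hq.ne' hp.ne'
  have e4 : Real.log ((1-q) / (1-p)) = Real.log (1-q) - Real.log (1-p) :=
    Real.log_div hq1'.ne' hp1'.ne'
  have key1 : p * Real.log (q/p) < q - p := by
    have : p * (q / p) = q := by field_simp
    nlinarith [mul_lt_mul_of_pos_left h1 hp]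
  have key2 : (1-p) * Real.log ((1-q)/(1-p)) < p - q := by
    have : (1-p) * ((1-q) / (1-p)) = 1 - q := by field_simp
    nlinarith [mul_lt_mul_of_pos_left h2 hp1']
  rw [kl, e1, e2]
  rw [e3] at key1; rw [e4] at key2
  nlinarith

/-- derivative of `kl p ·` at `y ∈ (0,1)`. -/
lemma hasDerivAt_kl_right {p y : ℝ} (hp : 0 < p) (hp1 : p < 1) (hy : 0 < y) (hy1 : y < 1) :
    HasDerivAt (fun z => kl p z) (-(p/y) + (1-p)/(1-y)) y := by
  have hy1' : (0:ℝ) < 1 - y := by linarith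
  have hp1' : (0:ℝ) < 1 - p := by linarith
  have hlog : HasDerivAt (fun z : ℝ => Real.log z) y⁻¹ y := Real.hasDerivAt_log hy.ne'
  have hlog2 : HasDerivAt (fun z : ℝ => Real.log (1 - z)) (-(1-y)⁻¹) y := by
    have h := (Real.hasDerivAt_log hy1'.ne').comp y
      (((hasDerivAt_id y).const_sub 1))
    exact (by simpa using h : HasDerivAt (Real.log ∘ HSub.hSub 1) (-(1 - y)⁻¹) y)
  have haux : HasDerivAt
      (fun z : ℝ => (p * Real.log p - p * Real.log z) + ((1-p) * Real.log (1-p)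
        - (1-p) * Real.log (1 - z))) (-(p/y) + (1-p)/(1-y)) y := by
    have h := ((hlog.const_mul p).const_sub (p * Real.log p)).add
      ((hlog2.const_mul (1-p)).const_sub ((1-p) * Real.log (1-p)))
    refine h.congr_deriv (Eq.symm ?_)
    field_simp
  refine haux.congr_of_eventuallyEq ?_
  have hmem : Set.Ioo (0:ℝ) 1 ∈ nhds y := (isOpen_Ioo).mem_nhds ⟨hy, hy1⟩
  filter_upwards [hmem] with z hz
  rw [kl, Real.log_div hp.ne' hz.1.ne', Real.log_div hp1'.ne' (by linarith [hz.2] : (1:ℝ)-z ≠ 0)]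
  ring

lemma marm_gt {μ1 μa x : ℝ} (hlt : μa < μ1) (hx : 0 ≤ x) : μa < marm μ1 μa x := by
  rw [marm, lt_div_iff₀ (by linarith : (0:ℝ) < 1 + x)]
  nlinarith

lemma marm_le {μ1 μa x : ℝ} (hlt : μa < μ1) (hx : 0 ≤ x) : marm μ1 μa x ≤ μ1 := by
  rw [marm, div_le_iff₀ (by linarith : (0:ℝ) < 1 + x)]
  nlinarith

lemma marm_lt_of_pos {μ1 μa x : ℝ} (hlt : μa < μ1) (hx : 0 < x) : marm μ1 μa x < μ1 := by
  rw [marm, div_lt_iff₀ (by linarith : (0:ℝ) < 1 + x)]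
  nlinarith

lemma hasDerivAt_marm {μ1 μa x : ℝ} (hx : 0 ≤ x) :
    HasDerivAt (marm μ1 μa) ((μa - μ1) / (1 + x)^2) x := by
  have hx1 : (1:ℝ) + x ≠ 0 := by linarith
  have h := (((hasDerivAt_id x).mul_const μa).const_add μ1).div
    ((hasDerivAt_id x).const_add 1) hx1
  have hfun : marm μ1 μa = fun y : ℝ => (μ1 + id y * μa) / (1 + id y) := rfl
  rw [hfun]
  refine h.congr_deriv (Eq.symm ?_)
  simp only [id, mul_one]
  field_simp
  ring

lemma hasDerivAt_garm {μ1 μa x : ℝ} (h0 : 0 < μa) (hlt : μa < μ1) (h1 : μ1 < 1)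
    (hx : 0 ≤ x) :
    HasDerivAt (garm μ1 μa) (kl μa (marm μ1 μa x)) x := by
  have hx1 : (0:ℝ) < 1 + x := by linarith
  set m := marm μ1 μa x with hm_def
  have hm_eq : m * (1 + x) = μ1 + x * μa := by
    rw [hm_def, marm, div_mul_cancel₀ _ hx1.ne']
  have hm0 : 0 < m := lt_trans h0 (marm_gt hlt hx)
  have hm1 : m < 1 := lt_of_le_of_lt (marm_le hlt hx) h1
  have hm1' : (0:ℝ) < 1 - m := by linarith
  have hM := hasDerivAt_marm (μ1 := μ1) (μa := μa) hx
  have hk1 := (hasDerivAt_kl_right (by linarith : (0:ℝ) < μ1) h1 hm0 hm1).comp x hM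
  have hk2 := (hasDerivAt_kl_right h0 (by linarith : μa < 1) hm0 hm1).comp x hM
  have hsum : (-(μ1/m) + (1-μ1)/(1-m)) + x * (-(μa/m) + (1-μa)/(1-m)) = 0 := by
    field_simp
    nlinarith [hm_eq]
  have h := hk1.add ((hasDerivAt_id x).mul hk2)
  simp only [Function.comp_def, id] at h
  have hfun : garm μ1 μa = fun y : ℝ => kl μ1 (marm μ1 μa y) + y * kl μa (marm μ1 μa y) := rfl
  rw [hfun]
  refine h.congr_deriv (Eq.symm ?_)
  linear_combination (-((μa - μ1)/(1+x)^2)) * hsum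

set_option maxHeartbeats 1000000 in
/-- `g_a` vanishes at `0`, is continuous and strictly increasing on `[0,∞)`,
tends to `kl(μ₁,μₐ)` at infinity, and is a bijection from `[0,∞)` onto `[0, kl(μ₁,μₐ))`. -/
theorem garm_properties (μ1 μa : ℝ) (h0 : 0 < μa) (hlt : μa < μ1) (h1 : μ1 < 1) :
    garm μ1 μa 0 = 0 ∧
    ContinuousOn (garm μ1 μa) (Set.Ici 0) ∧
    StrictMonoOn (garm μ1 μa) (Set.Ici 0) ∧
    Filter.Tendsto (garm μ1 μa) Filter.atTop (nhds (kl μ1 μa)) ∧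
    Set.BijOn (garm μ1 μa) (Set.Ici 0) (Set.Ico 0 (kl μ1 μa)) := by
  have h01 : (0:ℝ) < μ1 := lt_trans h0 hlt
  have ha1 : μa < 1 := lt_trans hlt h1
  have hg0 : garm μ1 μa 0 = 0 := by
    have : marm μ1 μa 0 = μ1 := by simp [marm]
    simp [garm, this, kl_self_s4 h01 h1]
  have hcont : ContinuousOn (garm μ1 μa) (Set.Ici 0) := fun x hx =>
    (hasDerivAt_garm h0 hlt h1 hx).continuousAt.continuousWithinAt
  have hmono : StrictMonoOn (garm μ1 μa) (Set.Ici 0) := by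
    apply strictMonoOn_of_deriv_pos (convex_Ici 0) hcont
    intro x hx
    rw [interior_Ici] at hx
    rw [(hasDerivAt_garm h0 hlt h1 hx.le).deriv]
    have hm0 : 0 < marm μ1 μa x := lt_trans h0 (marm_gt hlt hx.le)
    have hm1 : marm μ1 μa x < 1 := lt_of_le_of_lt (marm_le hlt hx.le) h1
    exact kl_pos_s4 h0 ha1 hm0 hm1 (marm_gt hlt hx.le).ne
  -- tendsto
  have htend : Filter.Tendsto (garm μ1 μa) Filter.atTop (nhds (kl μ1 μa)) := by
    have htau : Filter.Tendsto (fun x : ℝ => (1 + x)⁻¹) Filter.atTop (nhds 0) :=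
      (Filter.tendsto_atTop_add_const_left _ 1 Filter.tendsto_id).inv_tendsto_atTop
    have hm_tend : Filter.Tendsto (marm μ1 μa) Filter.atTop (nhds μa) := by
      have : Filter.Tendsto (fun x : ℝ => μa + (μ1 - μa) * (1 + x)⁻¹)
          Filter.atTop (nhds (μa + (μ1 - μa) * 0)) :=
        Filter.Tendsto.const_add _ (htau.const_mul _)
      rw [mul_zero, add_zero] at this
      refine this.congr' ?_
      filter_upwards [Filter.eventually_ge_atTop (0:ℝ)] with x hx
      have hx1 : (0:ℝ) < 1 + x := by linarith
      rw [marm]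
      field_simp
      ring
    have hcont_kl : ContinuousAt (fun z => kl μ1 z) μa :=
      (hasDerivAt_kl_right h01 h1 h0 ha1).continuousAt
    have h_first : Filter.Tendsto (fun x => kl μ1 (marm μ1 μa x)) Filter.atTop
        (nhds (kl μ1 μa)) := hcont_kl.tendsto.comp hm_tend
    -- second term: x * kl μa (marm x) → 0
    set ψ : ℝ → ℝ := fun t => kl μa (μa + (μ1 - μa) * t) with hψ
    have hψ0 : ψ 0 = 0 := by simp [hψ, kl_self_s4 h0 ha1]
    have hψd : HasDerivAt ψ 0 0 := by
      have hinner : HasDerivAt (fun t : ℝ => μa + (μ1 - μa) * t) (μ1 - μa) 0 := by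
        simpa using (((hasDerivAt_id (0:ℝ)).const_mul (μ1 - μa)).const_add μa)
      have h := (hasDerivAt_kl_right h0 ha1 (by simpa using h0) (by simpa using ha1)).comp 0 hinner
      simp only [Function.comp_def] at h
      have hval : (-(μa / (μa + (μ1 - μa) * 0)) + (1 - μa) / (1 - (μa + (μ1 - μa) * 0)))
          * (μ1 - μa) = 0 := by
        rw [mul_zero, add_zero, div_self h0.ne',
          div_self (by linarith : (1:ℝ) - μa ≠ 0)]
        ring
      rw [hval] at h
      exact h
    have hslope : Filter.Tendsto (slope ψ 0) (nhdsWithin 0 {(0:ℝ)}ᶜ) (nhds 0) :=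
      hasDerivAt_iff_tendsto_slope.mp hψd
    have htau' : Filter.Tendsto (fun x : ℝ => (1 + x)⁻¹) Filter.atTop
        (nhdsWithin 0 {(0:ℝ)}ᶜ) := by
      rw [tendsto_nhdsWithin_iff]
      refine ⟨htau, ?_⟩
      filter_upwards [Filter.eventually_ge_atTop (0:ℝ)] with x hx
      have : (0:ℝ) < 1 + x := by linarith
      simp [this.ne']
    have hratio : Filter.Tendsto (fun x : ℝ => x * (1 + x)⁻¹) Filter.atTop (nhds 1) := by
      have : Filter.Tendsto (fun x : ℝ => 1 - (1 + x)⁻¹) Filter.atTop (nhds (1 - 0)) :=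
        Filter.Tendsto.const_sub _ htau
      rw [sub_zero] at this
      refine this.congr' ?_
      filter_upwards [Filter.eventually_ge_atTop (0:ℝ)] with x hx
      have hx1 : (0:ℝ) < 1 + x := by linarith
      field_simp
      ring
    have h_second : Filter.Tendsto (fun x => x * kl μa (marm μ1 μa x)) Filter.atTop
        (nhds 0) := by
      have hprod : Filter.Tendsto
          (fun x : ℝ => (x * (1 + x)⁻¹) * slope ψ 0 ((1 + x)⁻¹)) Filter.atTop
          (nhds (1 * 0)) := hratio.mul (hslope.comp htau')
      rw [one_mul] at hprod
      refine hprod.congr' ?_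
      filter_upwards [Filter.eventually_gt_atTop (0:ℝ)] with x hx
      have hx1 : (0:ℝ) < 1 + x := by linarith
      have hmx : marm μ1 μa x = μa + (μ1 - μa) * (1 + x)⁻¹ := by
        rw [marm]; field_simp; ring
      have hsl : slope ψ 0 ((1 + x)⁻¹) = kl μa (marm μ1 μa x) * (1 + x) := by
        rw [slope_def_field, hψ0, sub_zero, sub_zero, div_eq_mul_inv, inv_inv]
        simp only [hψ]
        rw [← hmx]
      rw [hsl, show x * (1 + x)⁻¹ * (kl μa (marm μ1 μa x) * (1 + x))
        = x * kl μa (marm μ1 μa x) * ((1 + x)⁻¹ * (1 + x)) from by ring,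
        inv_mul_cancel₀ hx1.ne', mul_one]
    have := h_first.add h_second
    rw [add_zero] at this
    exact this.congr' (by filter_upwards with x; rw [garm])
  refine ⟨hg0, hcont, hmono, htend, ?_⟩
  have hle : ∀ x ∈ Set.Ici (0:ℝ), garm μ1 μa x ≤ kl μ1 μa := by
    intro x hx
    refine ge_of_tendsto htend ?_
    filter_upwards [Filter.eventually_ge_atTop x] with z hz
    exact hmono.monotoneOn hx (le_trans hx hz) hz
  have hmaps : Set.MapsTo (garm μ1 μa) (Set.Ici 0) (Set.Ico 0 (kl μ1 μa)) := by
    intro x hx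
    constructor
    · rw [← hg0]
      exact hmono.monotoneOn Set.self_mem_Ici hx hx
    · have hx0 : (0:ℝ) ≤ x := hx
      have hx1mem : x + 1 ∈ Set.Ici (0:ℝ) := Set.mem_Ici.mpr (by linarith)
      have h2 : garm μ1 μa x < garm μ1 μa (x + 1) :=
        hmono hx hx1mem (by linarith)
      exact lt_of_lt_of_le h2 (hle (x + 1) hx1mem)
  refine ⟨hmaps, hmono.injOn, ?_⟩
  intro y hy
  obtain ⟨b, hb0, hby⟩ : ∃ b : ℝ, 0 ≤ b ∧ y < garm μ1 μa b := by
    have hev := htend.eventually (eventually_gt_nhds hy.2)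
    obtain ⟨b, hb⟩ := (hev.and (Filter.eventually_ge_atTop (0:ℝ))).exists
    exact ⟨b, hb.2, hb.1⟩
  have hIcc : Set.Icc (garm μ1 μa 0) (garm μ1 μa b) ⊆ garm μ1 μa '' Set.Icc 0 b :=
    intermediate_value_Icc hb0 (hcont.mono Set.Icc_subset_Ici_self)
  have hy' : y ∈ Set.Icc (garm μ1 μa 0) (garm μ1 μa b) := ⟨by rw [hg0]; exact hy.1, hby.le⟩
  obtain ⟨x, hx, hgx⟩ := hIcc hy'
  exact ⟨x, hx.1, hgx⟩
end

section
/- Let K ≥ 2 and 0 < μ_K ≤ … ≤ μ_2 < μ_1 < 1. For each a ∈ {2,…,K}, let x_a : [0, kl(μ_1,μ_a)) → [0,∞) be the inverse of g_a. Define F_μ(y) = Σ_{a=2}^K kl(μ_1, m_a(x_a(y))) / kl(μ_a, m_a(x_a(y))) for y ∈ (0, kl(μ_1,μ_2)), and F_μ(0) = 0. Then F_μ is continuous and strictly increasing on [0, kl(μ_1,μ_2)), F_μ(0) = 0, and F_μ(y) → +∞ as y → kl(μ_1,μ_2) from below; consequently there is a unique y* ∈ (0, kl(μ_1,μ_2))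 with F_μ(y*) = 1. -/
lemma kl_self_s6 {c : ℝ} (hc0 : 0 < c) (hc1 : c < 1) : kl c c = 0 := by
  unfold kl
  rw [div_self hc0.ne', div_self (by linarith : (1:ℝ) - c ≠ 0), Real.log_one]
  ring

lemma kl_hasDerivAt {c y : ℝ} (hc0 : 0 < c) (hc1 : c < 1) (hy0 : 0 < y) (hy1 : y < 1) :
    HasDerivAt (kl c) ((y - c) / (y * (1 - y))) y := by
  have hA : HasDerivAt (fun z : ℝ => Real.log z) y⁻¹ y := Real.hasDerivAt_log hy0.ne'
  have hB : HasDerivAt (fun z : ℝ => (1 : ℝ) - z) (-1) y := (hasDerivAt_id y).const_sub 1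
  have hC : HasDerivAt (fun z : ℝ => Real.log (1 - z)) ((1 - y)⁻¹ * (-1)) y :=
    (Real.hasDerivAt_log (by linarith)).comp y hB
  have hD : HasDerivAt
      (fun z : ℝ => c * (Real.log c - Real.log z) + (1 - c) * (Real.log (1 - c) - Real.log (1 - z)))
      (c * (-y⁻¹) + (1 - c) * (-((1 - y)⁻¹ * (-1)))) y := by
    exact ((hA.const_sub (Real.log c)).const_mul c).add
      ((hC.const_sub (Real.log (1 - c))).const_mul (1 - c))
  have heq : kl c =ᶠ[nhds y] (fun z : ℝ =>
      c * (Real.log c - Real.log z) + (1 - c) * (Real.log (1 - c) - Real.log (1 - z))) := by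
    have hmem : Set.Ioo (0:ℝ) 1 ∈ nhds y := Ioo_mem_nhds hy0 hy1
    filter_upwards [hmem] with z hz
    unfold kl
    rw [Real.log_div hc0.ne' hz.1.ne', Real.log_div (by linarith : (1:ℝ) - c ≠ 0)
      (by linarith [hz.2] : (1:ℝ) - z ≠ 0)]
  have := hD.congr_of_eventuallyEq heq
  refine this.congr_deriv ?_
  have h1 : y ≠ 0 := hy0.ne'
  have h2 : (1:ℝ) - y ≠ 0 := by linarith
  field_simp
  ring

lemma kl_strictAntiOn {c : ℝ} (hc0 : 0 < c) (hc1 : c < 1) : StrictAntiOn (kl c) (Set.Ioc 0 c) := by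
  apply strictAntiOn_of_deriv_neg (convex_Ioc 0 c)
  · intro y hy
    exact (kl_hasDerivAt hc0 hc1 hy.1 (lt_of_le_of_lt hy.2 hc1)).differentiableAt.continuousAt.continuousWithinAt
  · intro y hy
    rw [interior_Ioc] at hy
    rw [(kl_hasDerivAt hc0 hc1 hy.1 (lt_trans hy.2 hc1)).deriv]
    apply div_neg_of_neg_of_pos
    · linarith [hy.2]
    · have h0 : (0:ℝ) < y := hy.1
      have : (0:ℝ) < 1 - y := by linarith [lt_trans hy.2 hc1]
      positivity

lemma kl_strictMonoOn {c : ℝ} (hc0 : 0 < c) (hc1 : c < 1) : StrictMonoOn (kl c) (Set.Ico c 1) := by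
  apply strictMonoOn_of_deriv_pos (convex_Ico c 1)
  · intro y hy
    exact (kl_hasDerivAt hc0 hc1 (lt_of_lt_of_le hc0 hy.1) hy.2).differentiableAt.continuousAt.continuousWithinAt
  · intro y hy
    rw [interior_Ico] at hy
    rw [(kl_hasDerivAt hc0 hc1 (lt_trans hc0 hy.1) hy.2).deriv]
    apply div_pos
    · linarith [hy.1]
    · have h0 : (0:ℝ) < y := lt_trans hc0 hy.1
      have : (0:ℝ) < 1 - y := by linarith [hy.2]
      positivity

lemma kl_pos_s6 {c y : ℝ} (hc0 : 0 < c) (hc1 : c < 1) (hy0 : 0 < y) (hy1 : y < 1) (hne : y ≠ c) :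
    0 < kl c y := by
  rcases lt_or_gt_of_ne hne with h | h
  · have := kl_strictAntiOn hc0 hc1 (Set.mem_Ioc.2 ⟨hy0, h.le⟩) (Set.mem_Ioc.2 ⟨hc0, le_refl c⟩) h
    rwa [kl_self_s6 hc0 hc1] at this
  · have := kl_strictMonoOn hc0 hc1 (Set.mem_Ico.2 ⟨le_refl c, hc1⟩) (Set.mem_Ico.2 ⟨h.le, hy1⟩) h
    rwa [kl_self_s6 hc0 hc1] at this

lemma kl_nonneg_s6 {c y : ℝ} (hc0 : 0 < c) (hc1 : c < 1) (hy0 : 0 < y) (hy1 : y < 1) :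
    0 ≤ kl c y := by
  rcases eq_or_ne y c with h | h
  · rw [h, kl_self_s6 hc0 hc1]
  · exact (kl_pos_s6 hc0 hc1 hy0 hy1 h).le


section arm
variable {p q : ℝ} (hq0 : 0 < q) (hqp : q < p) (hp1 : p < 1)

lemma marm_zero : marm p q 0 = p := by simp [marm]

include hq0 hqp hp1 in
lemma marm_mem {x : ℝ} (hx : 0 ≤ x) :
    q < marm p q x ∧ marm p q x ≤ p ∧ 0 < marm p q x ∧ marm p q x < 1 := by
  have hden : (0:ℝ) < 1 + x := by linarith
  have h1 : q < marm p q x := by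
    rw [marm, lt_div_iff₀ hden]; nlinarith
  have h2 : marm p q x ≤ p := by
    rw [marm, div_le_iff₀ hden]; nlinarith
  exact ⟨h1, h2, lt_trans hq0 h1, lt_of_le_of_lt h2 hp1⟩

lemma marm_hasDerivAt {x : ℝ} (hx : (0:ℝ) ≤ x) :
    HasDerivAt (marm p q) ((q - p) / (1 + x) ^ 2) x := by
  have hden : (1:ℝ) + x ≠ 0 := by positivity
  have h1 : HasDerivAt (fun z : ℝ => p + z * q) q x := by
    simpa using (HasDerivAt.const_add p ((hasDerivAt_id x).mul_const q))
  have h2 : HasDerivAt (fun z : ℝ => 1 + z) 1 x := by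
    simpa using (HasDerivAt.const_add 1 (hasDerivAt_id x))
  have := h1.div h2 hden
  refine this.congr_deriv ?_
  field_simp
  ring

include hq0 hqp hp1 in
lemma marm_strictAnti {x1 x2 : ℝ} (h1 : 0 ≤ x1) (h : x1 < x2) :
    marm p q x2 < marm p q x1 := by
  have d1 : (0:ℝ) < 1 + x1 := by linarith
  have d2 : (0:ℝ) < 1 + x2 := by linarith
  rw [marm, marm, div_lt_div_iff₀ d2 d1]
  nlinarith

include hq0 hqp hp1 in
lemma garm_hasDerivAt {x : ℝ} (hx : 0 ≤ x) :
    HasDerivAt (garm p q) (kl q (marm p q x)) x := by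
  obtain ⟨hm1, hm2, hm3, hm4⟩ := marm_mem hq0 hqp hp1 hx
  have hp0 : 0 < p := lt_trans hq0 hqp
  have hq1 : q < 1 := lt_trans hqp hp1
  have hm := marm_hasDerivAt (p := p) (q := q) hx
  set m := marm p q x with hmdef
  have hk1 : HasDerivAt (fun z : ℝ => kl p (marm p q z))
      ((m - p) / (m * (1 - m)) * ((q - p) / (1 + x) ^ 2)) x :=
    HasDerivAt.comp (h₂ := kl p) x (kl_hasDerivAt hp0 hp1 hm3 hm4) hm
  have hk2 : HasDerivAt (fun z : ℝ => kl q (marm p q z))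
      ((m - q) / (m * (1 - m)) * ((q - p) / (1 + x) ^ 2)) x :=
    HasDerivAt.comp (h₂ := kl q) x (kl_hasDerivAt hq0 hq1 hm3 hm4) hm
  have hmul : HasDerivAt (fun z : ℝ => z * kl q (marm p q z))
      (1 * kl q m + x * ((m - q) / (m * (1 - m)) * ((q - p) / (1 + x) ^ 2))) x :=
    (hasDerivAt_id x).mul hk2
  have htot := hk1.add hmul
  have hgoal : HasDerivAt (garm p q)
      ((m - p) / (m * (1 - m)) * ((q - p) / (1 + x) ^ 2) +
        (1 * kl q m + x * ((m - q) / (m * (1 - m)) * ((q - p) / (1 + x) ^ 2)))) x := htot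
  convert hgoal using 1
  have hden : (1:ℝ) + x ≠ 0 := by linarith
  have key : (m - p) + x * (m - q) = 0 := by
    rw [hmdef, marm]; field_simp; ring
  have hm0 : m ≠ 0 := hm3.ne'
  have hm1' : (1:ℝ) - m ≠ 0 := by linarith
  field_simp
  nlinarith [key, sq_nonneg (1 + x)]

end arm

section arm2
variable {p q : ℝ} (hq0 : 0 < q) (hqp : q < p) (hp1 : p < 1)

include hq0 hqp hp1 in
lemma garm_zero : garm p q 0 = 0 := by
  have hp0 : 0 < p := lt_trans hq0 hqp
  simp [garm, marm_zero, kl_self_s6 hp0 hp1]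

include hq0 hqp hp1 in
lemma garm_strictMonoOn : StrictMonoOn (garm p q) (Set.Ici 0) := by
  apply strictMonoOn_of_deriv_pos (convex_Ici 0)
  · intro y hy
    exact (garm_hasDerivAt hq0 hqp hp1 hy).differentiableAt.continuousAt.continuousWithinAt
  · intro y hy
    rw [interior_Ici] at hy
    rw [(garm_hasDerivAt hq0 hqp hp1 hy.le).deriv]
    obtain ⟨hm1, hm2, hm3, hm4⟩ := marm_mem hq0 hqp hp1 hy.le
    exact kl_pos_s6 hq0 (lt_trans hqp hp1) hm3 hm4 hm1.ne'

lemma kl_identity {p q M x : ℝ} (hp0 : 0 < p) (hp1 : p < 1) (hq0 : 0 < q) (hq1 : q < 1)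
    (hM0 : 0 < M) (hM1 : M < 1) (hM : (1 + x) * M = p + x * q) :
    kl p M + x * kl q M = kl p q - (1 + x) * kl M q := by
  unfold kl
  rw [Real.log_div hp0.ne' hM0.ne', Real.log_div (by linarith : (1:ℝ) - p ≠ 0)
      (by linarith : (1:ℝ) - M ≠ 0),
    Real.log_div hq0.ne' hM0.ne', Real.log_div (by linarith : (1:ℝ) - q ≠ 0)
      (by linarith : (1:ℝ) - M ≠ 0),
    Real.log_div hM0.ne' hq0.ne', Real.log_div (by linarith : (1:ℝ) - M ≠ 0)
      (by linarith : (1:ℝ) - q ≠ 0),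
    Real.log_div hp0.ne' hq0.ne', Real.log_div (by linarith : (1:ℝ) - p ≠ 0)
      (by linarith : (1:ℝ) - q ≠ 0)]
  linear_combination (Real.log M - Real.log (1 - M) - Real.log q + Real.log (1 - q)) * hM

include hq0 hqp hp1 in
lemma garm_lt {x : ℝ} (hx : 0 ≤ x) : garm p q x < kl p q := by
  obtain ⟨hm1, hm2, hm3, hm4⟩ := marm_mem hq0 hqp hp1 hx
  have hp0 : 0 < p := lt_trans hq0 hqp
  have hq1 : q < 1 := lt_trans hqp hp1
  have hM : (1 + x) * marm p q x = p + x * q := by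
    rw [marm]; field_simp
  have hid := kl_identity hp0 hp1 hq0 hq1 hm3 hm4 hM
  have hklpos : 0 < kl (marm p q x) q := kl_pos_s6 hm3 hm4 hq0 hq1 hm1.ne
  have hden : (0:ℝ) < 1 + x := by linarith
  rw [garm, hid]
  nlinarith

include hq0 hqp hp1 in
lemma garm_nonneg {x : ℝ} (hx : 0 ≤ x) : 0 ≤ garm p q x := by
  have := garm_strictMonoOn hq0 hqp hp1
  rcases eq_or_lt_of_le hx with h | h
  · rw [← h, garm_zero hq0 hqp hp1]
  · have := this (Set.self_mem_Ici) hx h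
    rw [garm_zero hq0 hqp hp1] at this
    exact this.le

end arm2

section arm3
variable {p q : ℝ} (hq0 : 0 < q) (hqp : q < p) (hp1 : p < 1) {X : ℝ → ℝ}
  (hX : ∀ y ∈ Set.Ico 0 (kl p q), 0 ≤ X y ∧ garm p q (X y) = y)

include hq0 hqp hp1 hX

lemma X_inv {b : ℝ} (hb : 0 ≤ b) :
    garm p q b ∈ Set.Ico 0 (kl p q) ∧ X (garm p q b) = b := by
  have hmem : garm p q b ∈ Set.Ico 0 (kl p q) :=
    ⟨garm_nonneg hq0 hqp hp1 hb, garm_lt hq0 hqp hp1 hb⟩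
  refine ⟨hmem, ?_⟩
  obtain ⟨hX0, hXg⟩ := hX _ hmem
  exact (garm_strictMonoOn hq0 hqp hp1).injOn hX0 hb hXg

lemma X_zero : X 0 = 0 := by
  obtain ⟨h1, h2⟩ := X_inv hq0 hqp hp1 hX (le_refl (0:ℝ))
  rwa [garm_zero hq0 hqp hp1] at h2

lemma X_mono : StrictMonoOn X (Set.Ico 0 (kl p q)) := by
  intro y1 h1 y2 h2 h
  by_contra hle
  push_neg at hle
  have := (garm_strictMonoOn hq0 hqp hp1).monotoneOn (hX y2 h2).1 (hX y1 h1).1 hle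
  rw [(hX y1 h1).2, (hX y2 h2).2] at this
  linarith

lemma X_pos {y : ℝ} (hy : y ∈ Set.Ico 0 (kl p q)) (h0 : 0 < y) : 0 < X y := by
  rcases eq_or_lt_of_le (hX y hy).1 with h | h
  · exfalso
    have := (hX y hy).2
    rw [← h, garm_zero hq0 hqp hp1] at this
    linarith
  · exact h

lemma X_cont : ContinuousOn X (Set.Ico 0 (kl p q)) := by
  have hL : 0 < kl p q :=
    kl_pos_s6 (lt_trans hq0 hqp) hp1 hq0 (lt_trans hqp hp1) hqp.ne
  intro y hy
  rcases eq_or_lt_of_le hy.1 with h0 | h0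
  · subst h0
    have hc := (X_mono hq0 hqp hp1 hX).continuousWithinAt_right_of_exists_between
      (Ico_mem_nhdsGE_of_mem ⟨le_refl 0, hL⟩) ?_
    · exact hc.mono Set.Ico_subset_Ici_self
    · intro b hb
      rw [X_zero hq0 hqp hp1 hX] at hb ⊢
      obtain ⟨hmem, hval⟩ := X_inv hq0 hqp hp1 hX hb.le
      exact ⟨garm p q b, hmem, by rw [hval]; exact ⟨hb, le_refl b⟩⟩
  · apply ContinuousAt.continuousWithinAt
    apply (X_mono hq0 hqp hp1 hX).continuousAt_of_exists_between (Ico_mem_nhds h0 hy.2)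
    · intro b hb
      have hXy : 0 < X y := X_pos hq0 hqp hp1 hX hy h0
      obtain ⟨hmem, hval⟩ := X_inv hq0 hqp hp1 hX (le_max_right b 0)
      exact ⟨garm p q (max b 0), hmem, by rw [hval]; exact ⟨le_max_left b 0, max_lt hb hXy⟩⟩
    · intro b hb
      have hb0 : 0 ≤ b := le_trans (hX y hy).1 hb.le
      obtain ⟨hmem, hval⟩ := X_inv hq0 hqp hp1 hX hb0
      exact ⟨garm p q b, hmem, by rw [hval]; exact ⟨hb, le_refl b⟩⟩

lemma f_zero : kl p (marm p q (X 0)) / kl q (marm p q (X 0)) = 0 := by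
  rw [X_zero hq0 hqp hp1 hX, marm_zero, kl_self_s6 (lt_trans hq0 hqp) hp1, zero_div]

lemma f_nonneg {y : ℝ} (hy : y ∈ Set.Ico 0 (kl p q)) :
    0 ≤ kl p (marm p q (X y)) / kl q (marm p q (X y)) := by
  obtain ⟨hm1, hm2, hm3, hm4⟩ := marm_mem hq0 hqp hp1 (hX y hy).1
  exact div_nonneg (kl_nonneg_s6 (lt_trans hq0 hqp) hp1 hm3 hm4)
    (kl_pos_s6 hq0 (lt_trans hqp hp1) hm3 hm4 hm1.ne').le

lemma f_cont :
    ContinuousOn (fun y => kl p (marm p q (X y)) / kl q (marm p q (X y)))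
      (Set.Ico 0 (kl p q)) := by
  have hp0 : 0 < p := lt_trans hq0 hqp
  have hq1 : q < 1 := lt_trans hqp hp1
  have hnum : ContinuousOn (fun y => kl p (marm p q (X y))) (Set.Ico 0 (kl p q)) := by
    intro y hy
    obtain ⟨hm1, hm2, hm3, hm4⟩ := marm_mem hq0 hqp hp1 (hX y hy).1
    exact (((kl_hasDerivAt hp0 hp1 hm3 hm4).differentiableAt.continuousAt).comp
      ((marm_hasDerivAt (p := p) (q := q) (hX y hy).1).differentiableAt.continuousAt)).comp_continuousWithinAt
      (X_cont hq0 hqp hp1 hX y hy)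
  have hden : ContinuousOn (fun y => kl q (marm p q (X y))) (Set.Ico 0 (kl p q)) := by
    intro y hy
    obtain ⟨hm1, hm2, hm3, hm4⟩ := marm_mem hq0 hqp hp1 (hX y hy).1
    exact (((kl_hasDerivAt hq0 hq1 hm3 hm4).differentiableAt.continuousAt).comp
      ((marm_hasDerivAt (p := p) (q := q) (hX y hy).1).differentiableAt.continuousAt)).comp_continuousWithinAt
      (X_cont hq0 hqp hp1 hX y hy)
  apply hnum.div hden
  intro y hy
  obtain ⟨hm1, hm2, hm3, hm4⟩ := marm_mem hq0 hqp hp1 (hX y hy).1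
  exact (kl_pos_s6 hq0 hq1 hm3 hm4 hm1.ne').ne'

lemma f_strictMono :
    StrictMonoOn (fun y => kl p (marm p q (X y)) / kl q (marm p q (X y)))
      (Set.Ico 0 (kl p q)) := by
  have hp0 : 0 < p := lt_trans hq0 hqp
  have hq1 : q < 1 := lt_trans hqp hp1
  intro y1 h1 y2 h2 h
  have hx1 : 0 ≤ X y1 := (hX y1 h1).1
  have hlt : X y1 < X y2 := X_mono hq0 hqp hp1 hX h1 h2 h
  obtain ⟨ha1, ha2, ha3, ha4⟩ := marm_mem hq0 hqp hp1 hx1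
  obtain ⟨hb1, hb2, hb3, hb4⟩ := marm_mem hq0 hqp hp1 (le_trans hx1 hlt.le)
  have hm21 : marm p q (X y2) < marm p q (X y1) := marm_strictAnti hq0 hqp hp1 hx1 hlt
  have hnum : kl p (marm p q (X y1)) < kl p (marm p q (X y2)) :=
    kl_strictAntiOn hp0 hp1 ⟨hb3, hb2⟩ ⟨ha3, ha2⟩ hm21
  have hden : kl q (marm p q (X y2)) < kl q (marm p q (X y1)) :=
    kl_strictMonoOn hq0 hq1 ⟨hb1.le, hb4⟩ ⟨ha1.le, ha4⟩ hm21
  have hnum1 : 0 ≤ kl p (marm p q (X y1)) := kl_nonneg_s6 hp0 hp1 ha3 ha4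
  have hden2 : 0 < kl q (marm p q (X y2)) := kl_pos_s6 hq0 hq1 hb3 hb4 hb1.ne'
  have hden1 : 0 < kl q (marm p q (X y1)) := kl_pos_s6 hq0 hq1 ha3 ha4 ha1.ne'
  simp only
  rw [div_lt_div_iff₀ hden1 hden2]
  nlinarith

lemma f_unbounded (C : ℝ) :
    ∃ y0 ∈ Set.Ico 0 (kl p q), ∀ y ∈ Set.Ico 0 (kl p q), y0 < y →
      C ≤ kl p (marm p q (X y)) / kl q (marm p q (X y)) := by
  have hp0 : 0 < p := lt_trans hq0 hqp
  have hq1 : q < 1 := lt_trans hqp hp1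
  have hL : 0 < kl p q := kl_pos_s6 hp0 hp1 hq0 hq1 hqp.ne
  -- marm tends to q at infinity
  have hm_tendsto : Filter.Tendsto (fun x => marm p q x) Filter.atTop (nhds q) := by
    have h1 : Filter.Tendsto (fun x : ℝ => q + (p - q) / (1 + x)) Filter.atTop (nhds (q + 0)) :=
      tendsto_const_nhds.add (Filter.Tendsto.div_atTop tendsto_const_nhds
        (Filter.tendsto_atTop_add_const_left _ 1 Filter.tendsto_id))
    rw [add_zero] at h1
    apply h1.congr'
    filter_upwards [Filter.eventually_ge_atTop (0:ℝ)] with x hx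
    have : (1:ℝ) + x ≠ 0 := by linarith
    rw [marm]
    field_simp
    ring
  have hnum_t : Filter.Tendsto (fun x => kl p (marm p q x)) Filter.atTop (nhds (kl p q)) :=
    ((kl_hasDerivAt hp0 hp1 hq0 hq1).differentiableAt.continuousAt.tendsto).comp hm_tendsto
  have hden_t : Filter.Tendsto (fun x => kl q (marm p q x)) Filter.atTop
      (nhdsWithin 0 (Set.Ioi 0)) := by
    apply tendsto_nhdsWithin_of_tendsto_nhds_of_eventually_within
    · have := ((kl_hasDerivAt hq0 hq1 hq0 hq1).differentiableAt.continuousAt.tendsto).comp hm_tendsto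
      rwa [kl_self_s6 hq0 hq1] at this
    · filter_upwards [Filter.eventually_ge_atTop (0:ℝ)] with x hx
      obtain ⟨hm1, hm2, hm3, hm4⟩ := marm_mem hq0 hqp hp1 hx
      exact kl_pos_s6 hq0 hq1 hm3 hm4 hm1.ne'
  have hratio : Filter.Tendsto (fun x => kl p (marm p q x) / kl q (marm p q x))
      Filter.atTop Filter.atTop := by
    simp only [div_eq_mul_inv]
    exact Filter.Tendsto.pos_mul_atTop hL hnum_t hden_t.inv_tendsto_nhdsGT_zero
  obtain ⟨x0, hx0⟩ := (Filter.tendsto_atTop.mp hratio C).exists_forall_of_atTop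
  obtain ⟨hmem, hval⟩ := X_inv hq0 hqp hp1 hX (le_max_right x0 0)
  refine ⟨garm p q (max x0 0), hmem, ?_⟩
  intro y hy hlt
  have hXy : max x0 0 < X y := by
    by_contra hle
    push_neg at hle
    have := (garm_strictMonoOn hq0 hqp hp1).monotoneOn (hX y hy).1 (le_max_right x0 0) hle
    rw [(hX y hy).2] at this
    linarith
  exact hx0 (X y) (le_trans (le_max_left x0 0) hXy.le)

end arm3

/-- the function `F_μ` is continuous and strictly increasing on
`[0, kl(μ₁,μ₂))`, vanishes at `0`, tends to `+∞` at `kl(μ₁,μ₂)` from below, and hence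
admits a unique root `y*` of `F_μ(y*) = 1` in `(0, kl(μ₁,μ₂))`.
Arm `1` of the paper is index `0`, arm `2` is index `1`; `x a` denotes the inverse of
`g_a` on `[0, kl(μ₁,μₐ))` (characterized by the hypothesis `hx`). -/
theorem F_properties (K : ℕ) (μ : Fin (K + 2) → ℝ)
    (hpos : ∀ a, 0 < μ a) (h1 : μ 0 < 1) (h2 : μ 1 < μ 0)
    (hsort : ∀ a b : Fin (K + 2), a ≠ 0 → a ≤ b → μ b ≤ μ a)
    (x : Fin (K + 2) → ℝ → ℝ)
    (hx : ∀ a : Fin (K + 2), a ≠ 0 → ∀ y ∈ Set.Ico 0 (kl (μ 0) (μ a)),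
      0 ≤ x a y ∧ garm (μ 0) (μ a) (x a y) = y) :
    let F : ℝ → ℝ := fun y => ∑ a ∈ Finset.univ.erase (0 : Fin (K + 2)),
      kl (μ 0) (marm (μ 0) (μ a) (x a y)) / kl (μ a) (marm (μ 0) (μ a) (x a y))
    F 0 = 0 ∧
    ContinuousOn F (Set.Ico 0 (kl (μ 0) (μ 1))) ∧
    StrictMonoOn F (Set.Ico 0 (kl (μ 0) (μ 1))) ∧
    Filter.Tendsto F (nhdsWithin (kl (μ 0) (μ 1)) (Set.Iio (kl (μ 0) (μ 1)))) Filter.atTop ∧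
    ∃! y : ℝ, y ∈ Set.Ioo 0 (kl (μ 0) (μ 1)) ∧ F y = 1 := by
  intro F
  have hF : ∀ y, F y = ∑ a ∈ Finset.univ.erase (0 : Fin (K + 2)),
      kl (μ 0) (marm (μ 0) (μ a) (x a y)) / kl (μ a) (marm (μ 0) (μ a) (x a y)) :=
    fun y => rfl
  have hone : (1 : Fin (K + 2)) ≠ 0 := by
    simp [Fin.ext_iff]
  have hle1 : ∀ a : Fin (K + 2), a ≠ 0 → μ a ≤ μ 1 := by
    intro a ha
    apply hsort 1 a hone
    rw [Fin.le_def, Fin.val_one]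
    have : a.val ≠ 0 := by
      exact Fin.val_ne_zero_iff.mpr ha
    omega
  have hp0 : 0 < μ 0 := hpos 0
  have hq1 : 0 < μ 1 := hpos 1
  set L := kl (μ 0) (μ 1) with hLdef
  have hL : 0 < L := kl_pos_s6 hp0 h1 hq1 (lt_trans h2 h1) h2.ne
  -- per-arm facts
  have hqp : ∀ a : Fin (K + 2), a ≠ 0 → μ a < μ 0 :=
    fun a ha => lt_of_le_of_lt (hle1 a ha) h2
  have hsub : ∀ a : Fin (K + 2), a ≠ 0 →
      Set.Ico (0:ℝ) L ⊆ Set.Ico 0 (kl (μ 0) (μ a)) := by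
    intro a ha
    apply Set.Ico_subset_Ico_right
    exact (kl_strictAntiOn hp0 h1).antitoneOn ⟨hpos a, (hqp a ha).le⟩ ⟨hq1, h2.le⟩ (hle1 a ha)
  -- F 0 = 0
  have hF0 : F 0 = 0 := by
    rw [hF]
    apply Finset.sum_eq_zero
    intro a ha
    have ha0 : a ≠ 0 := (Finset.mem_erase.1 ha).1
    exact f_zero (hpos a) (hqp a ha0) h1 (hx a ha0)
  -- continuity
  have hcont : ContinuousOn F (Set.Ico 0 L) := by
    have : ContinuousOn (fun y => ∑ a ∈ Finset.univ.erase (0 : Fin (K + 2)),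
        kl (μ 0) (marm (μ 0) (μ a) (x a y)) / kl (μ a) (marm (μ 0) (μ a) (x a y)))
        (Set.Ico 0 L) := by
      apply continuousOn_finset_sum
      intro a ha
      have ha0 : a ≠ 0 := (Finset.mem_erase.1 ha).1
      exact (f_cont (hpos a) (hqp a ha0) h1 (hx a ha0)).mono (hsub a ha0)
    exact this
  -- strict monotonicity
  have hmono : StrictMonoOn F (Set.Ico 0 L) := by
    intro y1 hy1 y2 hy2 h
    rw [hF, hF]
    apply Finset.sum_lt_sum
    · intro a ha
      have ha0 : a ≠ 0 := (Finset.mem_erase.1 ha).1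
      exact (f_strictMono (hpos a) (hqp a ha0) h1 (hx a ha0)
        (hsub a ha0 hy1) (hsub a ha0 hy2) h).le
    · refine ⟨1, Finset.mem_erase.2 ⟨hone, Finset.mem_univ 1⟩, ?_⟩
      exact f_strictMono hq1 h2 h1 (hx 1 hone) hy1 hy2 h
  -- nonnegativity of each summand, and a lower bound by arm 1
  have hFge : ∀ y ∈ Set.Ico (0:ℝ) L,
      kl (μ 0) (marm (μ 0) (μ 1) (x 1 y)) / kl (μ 1) (marm (μ 0) (μ 1) (x 1 y)) ≤ F y := by
    intro y hy
    rw [hF]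
    apply Finset.single_le_sum (f := fun a =>
      kl (μ 0) (marm (μ 0) (μ a) (x a y)) / kl (μ a) (marm (μ 0) (μ a) (x a y)))
    · intro a ha
      have ha0 : a ≠ 0 := (Finset.mem_erase.1 ha).1
      exact f_nonneg (hpos a) (hqp a ha0) h1 (hx a ha0) (hsub a ha0 hy)
    · exact Finset.mem_erase.2 ⟨hone, Finset.mem_univ 1⟩
  -- tendsto atTop
  have htends : Filter.Tendsto F (nhdsWithin L (Set.Iio L)) Filter.atTop := by
    rw [Filter.tendsto_atTop]
    intro C
    obtain ⟨y0, hy0mem, hy0⟩ := f_unbounded hq1 h2 h1 (hx 1 hone) C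
    have hIoo : Set.Ioo y0 L ∈ nhdsWithin L (Set.Iio L) :=
      Ioo_mem_nhdsLT_of_mem ⟨hy0mem.2, le_refl L⟩
    filter_upwards [hIoo] with y hy
    have hymem : y ∈ Set.Ico (0:ℝ) L := ⟨le_trans hy0mem.1 hy.1.le, hy.2⟩
    have hC := hy0 y hymem hy.1
    have := hFge y hymem
    linarith
  refine ⟨hF0, hcont, hmono, htends, ?_⟩
  -- existence and uniqueness of the root
  have hev : ∀ᶠ y in nhdsWithin L (Set.Iio L), 2 ≤ F y := Filter.tendsto_atTop.mp htends 2
  have hev2 : ∀ᶠ y in nhdsWithin L (Set.Iio L), y ∈ Set.Ioo 0 L :=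
    Filter.eventually_of_mem (Ioo_mem_nhdsLT_of_mem ⟨hL, le_refl L⟩) (fun y hy => hy)
  obtain ⟨y1, h2C, hy1⟩ := (hev.and hev2).exists
  have hsub1 : Set.Icc (0:ℝ) y1 ⊆ Set.Ico 0 L := fun z hz => ⟨hz.1, lt_of_le_of_lt hz.2 hy1.2⟩
  have hivt := intermediate_value_Icc hy1.1.le (hcont.mono hsub1)
  have h1mem : (1:ℝ) ∈ Set.Icc (F 0) (F y1) := by
    rw [hF0]
    exact ⟨zero_le_one, by linarith⟩
  obtain ⟨ys, hysmem, hysval⟩ := hivt h1mem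
  have hyspos : 0 < ys := by
    rcases eq_or_lt_of_le hysmem.1 with h | h
    · exfalso
      rw [← h, hF0] at hysval
      norm_num at hysval
    · exact h
  have hysL : ys < L := lt_of_le_of_lt hysmem.2 hy1.2
  refine ⟨ys, ⟨⟨hyspos, hysL⟩, hysval⟩, ?_⟩
  intro y' ⟨hy'mem, hy'val⟩
  exact hmono.injOn ⟨hy'mem.1.le, hy'mem.2⟩ ⟨hyspos.le, hysL⟩ (hy'val.trans hysval.symm)
end
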